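/- arXiv:1812.00284 — 7 statements merged into one kernel-verified Lean document; each statement's English description precedes it below -/
import Mathlib

section
/- Let γ ≥ 0 be an integer and let S be a γ-hyperelliptic numerical semigroup of genus g with g ≥ 2γ+1. Then the K-weight of S satisfies W_K ≥ C(g-2γ, 2) + 2γ, where C(n,2) denotes the binomial coefficient n choose 2. -/
/-- A numerical semigroup: a subset of ℕ containing 0, closed under addition,
with finite complement. -/
def IsNumericalSemigroup (S : Set ℕ) : Prop :=
  0 ∈ S ∧ (∀ a ∈ S, ∀ b ∈ S, a + b ∈ S) ∧ Sᶜ.Finite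

/-- The genus of `S`: the number of gaps (elements of ℕ not in `S`). -/
noncomputable def genus (S : Set ℕ) : ℕ := Sᶜ.ncard

/-- `gap S i` is the `(i+1)`-st smallest gap of `S`, i.e. `ℓ_{i+1}` (0-indexed). -/
noncomputable def gap (S : Set ℕ) (i : ℕ) : ℕ := Nat.nth (fun n => n ∉ S) i

/-- The K-weight of `S`: `W_K = Σ_{i=1}^{g-1} (ℓ_i - i) + g - 1`. -/
noncomputable def Kweight (S : Set ℕ) : ℕ :=
  (∑ i ∈ Finset.range (genus S - 1), (gap S i - (i + 1))) + genus S - 1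

/-- The S-weight of `S`: `W_S = Σ_{i=1}^{g} (ℓ_i - i)`. -/
noncomputable def Sweight (S : Set ℕ) : ℕ :=
  ∑ i ∈ Finset.range (genus S), (gap S i - (i + 1))

/-- `S` is γ-hyperelliptic: it has exactly γ even elements in `[2, 4γ]`, and the
`(γ+1)`-st smallest positive element of `S` is `4γ+2`. -/
def GammaHyperelliptic (γ : ℕ) (S : Set ℕ) : Prop :=
  {n | n ∈ Set.Icc 2 (4 * γ) ∧ Even n ∧ n ∈ S}.ncard = γ ∧
  Nat.nth (fun n => n ∈ S ∧ n ≠ 0) γ = 4 * γ + 2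

section AuxKweight
open Finset



lemma sum_distinct_ge (U : Finset ℕ) : U.card * U.card ≤ 2 * (∑ u ∈ U, u) + U.card := by
  induction U using Finset.induction_on_max with
  | empty => simp
  | insert a s ha ih =>
    have hs : s ⊆ Finset.range a := fun x hx => Finset.mem_range.mpr (ha x hx)
    have hc : s.card ≤ a := by simpa using Finset.card_le_card hs
    have hna : a ∉ s := fun h => lt_irrefl a (ha a h)
    rw [Finset.card_insert_of_notMem hna, Finset.sum_insert hna]
    nlinarith [ih]

lemma sum_distinct_pos_ge (U : Finset ℕ) (hU : ∀ u ∈ U, 1 ≤ u) :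
    U.card * (U.card + 1) ≤ 2 * (∑ u ∈ U, u) := by
  induction U using Finset.induction_on_max with
  | empty => simp
  | insert a s ha ih =>
    have hs : s ⊆ Finset.Ioo 0 a := fun x hx =>
      Finset.mem_Ioo.mpr ⟨hU x (Finset.mem_insert_of_mem hx), ha x hx⟩
    have hc : s.card ≤ a - 1 := by simpa using Finset.card_le_card hs
    have ha1 : 1 ≤ a := hU a (Finset.mem_insert_self a s)
    have hna : a ∉ s := fun h => lt_irrefl a (ha a h)
    have ih' := ih (fun u hu => hU u (Finset.mem_insert_of_mem hu))
    rw [Finset.card_insert_of_notMem hna, Finset.sum_insert hna]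
    have hc' : s.card + 1 ≤ a := by omega
    nlinarith [ih']

lemma sum_odd_ge (U : Finset ℕ) (hU : ∀ u ∈ U, u % 2 = 1) :
    U.card * U.card ≤ ∑ u ∈ U, u := by
  have hinj : Set.InjOn (· / 2) U := by
    intro x hx y hy hxy
    have := hU x hx; have := hU y hy
    simp only at hxy
    omega
  have hcard : (U.image (· / 2)).card = U.card := Finset.card_image_of_injOn hinj
  have hsum : ∑ v ∈ U.image (· / 2), v = ∑ u ∈ U, u / 2 :=
    Finset.sum_image (fun x hx y hy h => hinj hx hy h)
  have h1 : ∑ u ∈ U, u = 2 * (∑ u ∈ U, u / 2) + U.card := by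
    have : ∑ u ∈ U, u = ∑ u ∈ U, (2 * (u / 2) + 1) :=
      Finset.sum_congr rfl (fun x hx => by have := hU x hx; omega)
    rw [this, Finset.sum_add_distrib, ← Finset.mul_sum]
    simp
  have h2 := sum_distinct_ge (U.image (· / 2))
  rw [hcard, hsum] at h2
  omega

lemma sum_even_pos_ge (U : Finset ℕ) (hU : ∀ u ∈ U, u % 2 = 0 ∧ 1 ≤ u) :
    U.card * (U.card + 1) ≤ ∑ u ∈ U, u := by
  have hinj : Set.InjOn (· / 2) U := by
    intro x hx y hy hxy
    have := hU x hx; have := hU y hy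
    simp only at hxy
    omega
  have hcard : (U.image (· / 2)).card = U.card := Finset.card_image_of_injOn hinj
  have hsum : ∑ v ∈ U.image (· / 2), v = ∑ u ∈ U, u / 2 :=
    Finset.sum_image (fun x hx y hy h => hinj hx hy h)
  have h1 : ∑ u ∈ U, u = 2 * (∑ u ∈ U, u / 2) := by
    have : ∑ u ∈ U, u = ∑ u ∈ U, (2 * (u / 2)) :=
      Finset.sum_congr rfl (fun x hx => by have := hU x hx; omega)
    rw [this, ← Finset.mul_sum]
  have h2 := sum_distinct_pos_ge (U.image (· / 2)) (by
    intro v hv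
    obtain ⟨u, hu, rfl⟩ := Finset.mem_image.mp hv
    have := hU u hu; omega)
  rw [hcard, hsum] at h2
  omega


lemma card_even_range (m : ℕ) : ((Finset.range m).filter (fun k => k % 2 = 0)).card = (m+1)/2 := by
  induction m with
  | zero => simp
  | succ m ih =>
    rw [Finset.range_add_one, Finset.filter_insert]
    by_cases h : m % 2 = 0
    · rw [if_pos h, Finset.card_insert_of_notMem (by simp [Finset.mem_filter])]
      omega
    · rw [if_neg h]; omega

lemma evens_ge_mem (γ : ℕ) (S : Set ℕ) (h0 : 0 ∈ S)
    (hadd : ∀ a ∈ S, ∀ b ∈ S, a + b ∈ S)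
    (EG : Finset ℕ) (hEGcard : EG.card ≤ γ)
    (hEGmem : ∀ k, 2 ≤ k → k ≤ 4*γ → k % 2 = 0 → k ∉ S → k ∈ EG)
    (hbase : 4*γ+2 ∈ S) :
    ∀ n, n % 2 = 0 → 4*γ+2 ≤ n → n ∈ S := by
  intro n
  induction n using Nat.strong_induction_on with
  | _ n IH =>
    intro hn2 hn4
    by_contra hnS
    have hne : n ≠ 4*γ+2 := by rintro rfl; exact hnS hbase
    have hn44 : 4*γ+4 ≤ n := by omega
    classical
    set Evn := (Finset.range (n+1)).filter (fun k => k % 2 = 0) with hEvnDef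
    have hEvncard : Evn.card = n / 2 + 1 := by
      rw [hEvnDef, card_even_range]; omega
    have hAB := Finset.card_filter_add_card_filter_not (s := Evn)
      (p := fun k => k ∈ S)
    set A := Evn.filter (fun k => k ∈ S) with hADef
    set B := Evn.filter (fun k => ¬ k ∈ S) with hBDef
    have hBsub : B ⊆ insert n EG := by
      intro k hk
      rw [hBDef, Finset.mem_filter, hEvnDef, Finset.mem_filter, Finset.mem_range] at hk
      obtain ⟨⟨hkn, hk2⟩, hkS⟩ := hk
      rw [Finset.mem_insert]
      by_cases hkn' : k = n
      · left; exact hkn'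
      right
      have hk0 : k ≠ 0 := by rintro rfl; exact hkS h0
      by_cases hk4 : k ≤ 4*γ
      · exact hEGmem k (by omega) hk4 hk2 hkS
      · exact absurd (IH k (by omega) hk2 (by omega)) hkS
    have hBcard : B.card ≤ γ + 1 := by
      calc B.card ≤ (insert n EG).card := Finset.card_le_card hBsub
        _ ≤ EG.card + 1 := Finset.card_insert_le _ _
        _ ≤ γ + 1 := by omega
    have hAcard : A.card ≤ B.card := by
      apply Finset.card_le_card_of_injOn (fun a => n - a)
      · intro a ha
        rw [hADef, Finset.mem_coe, Finset.mem_filter, hEvnDef, Finset.mem_filter, Finset.mem_range] at ha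
        obtain ⟨⟨han, ha2⟩, haS⟩ := ha
        rw [hBDef, Finset.mem_coe, Finset.mem_filter, hEvnDef, Finset.mem_filter, Finset.mem_range]
        beta_reduce
        refine ⟨⟨by omega, by omega⟩, fun hc => hnS ?_⟩
        have := hadd a haS (n - a) hc
        rwa [Nat.add_sub_cancel' (by omega)] at this
      · intro a ha b hb hab
        have ha' : a < n + 1 := by
          have h := Finset.mem_coe.mp ha
          rw [hADef, Finset.mem_filter, hEvnDef, Finset.mem_filter, Finset.mem_range] at h
          exact h.1.1
        have hb' : b < n + 1 := by
          have h := Finset.mem_coe.mp hb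
          rw [hADef, Finset.mem_filter, hEvnDef, Finset.mem_filter, Finset.mem_range] at h
          exact h.1.1
        simp only at hab
        omega
    omega

end AuxKweight

theorem Kweight_lower_bound (γ g : ℕ) (S : Set ℕ)
    (hS : IsNumericalSemigroup S) (hγ : GammaHyperelliptic γ S)
    (hg : genus S = g) (hgen : 2 * γ + 1 ≤ g) :
    Nat.choose (g - 2 * γ) 2 + 2 * γ ≤ Kweight S := by
  classical
  obtain ⟨h0, hadd, hfin⟩ := hS
  have hfin' : (setOf fun n => n ∉ S).Finite := hfin
  have hcardg : hfin'.toFinset.card = g := by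
    rw [← hg]
    exact (Set.ncard_eq_toFinset_card _ hfin').symm
  -- 4γ+2 ∈ S
  have hSinf : S.Infinite := by
    intro hSf
    have := (hSf.union hfin)
    rw [Set.union_compl_self] at this
    exact Set.infinite_univ this
  have hp'inf : (setOf fun n => n ∈ S ∧ n ≠ 0).Infinite := by
    have heq : (setOf fun n => n ∈ S ∧ n ≠ 0) = S \ {0} := by
      ext x; simp [Set.mem_diff]; exact Iff.rfl
    rw [heq]
    exact hSinf.diff (Set.finite_singleton 0)
  have hbase : 4*γ+2 ∈ S := by
    have h := Nat.nth_mem_of_infinite hp'inf γ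
    rw [hγ.2] at h
    exact h.1
  -- even gaps finset
  set EvIcc := (Finset.Icc 2 (4*γ)).filter (fun k => k % 2 = 0) with hEvIccDef
  have hEvIcc_card : EvIcc.card = 2*γ := by
    have heq : EvIcc = ((Finset.range (4*γ+1)).filter (fun k => k % 2 = 0)).erase 0 := by
      ext k
      simp only [hEvIccDef, Finset.mem_filter, Finset.mem_Icc, Finset.mem_erase,
        Finset.mem_range]
      omega
    rw [heq, Finset.card_erase_of_mem (by simp), card_even_range]
    omega
  have hpart := Finset.card_filter_add_card_filter_not (s := EvIcc)
    (p := fun k => k ∈ S)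
  set EGS := EvIcc.filter (fun k => k ∈ S) with hEGSDef
  set EG := EvIcc.filter (fun k => ¬ k ∈ S) with hEGDef
  have hEGS_card : EGS.card = γ := by
    have hseteq : {n | n ∈ Set.Icc 2 (4 * γ) ∧ Even n ∧ n ∈ S} = ↑EGS := by
      ext k
      simp only [Set.mem_setOf_eq, Set.mem_Icc, Nat.even_iff, hEGSDef, hEvIccDef,
        Finset.coe_filter, Finset.mem_filter, Finset.mem_Icc]
      tauto
    have := hγ.1
    rw [hseteq, Set.ncard_coe_finset] at this
    exact this
  have hEG_card : EG.card ≤ γ := by omega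
  have hEGmem : ∀ k, 2 ≤ k → k ≤ 4*γ → k % 2 = 0 → k ∉ S → k ∈ EG := by
    intro k h1 h2 h3 h4
    rw [hEGDef, Finset.mem_filter, hEvIccDef, Finset.mem_filter, Finset.mem_Icc]
    exact ⟨⟨⟨h1, h2⟩, h3⟩, h4⟩
  have hevens := evens_ge_mem γ S h0 hadd EG hEG_card hEGmem hbase
  -- gap sequence
  set ℓ : ℕ → ℕ := fun i => Nat.nth (fun n => n ∉ S) i with hℓDef
  have hmono : ∀ i j, i < j → j < g → ℓ i < ℓ j := by
    intro i j hij hj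
    exact Nat.nth_lt_nth_of_lt_card hfin' hij (by rw [← Set.ncard_eq_toFinset_card (Set.ofPred fun n => n ∉ S) hfin']; change j < genus S; omega)
  have hmem : ∀ i, i < g → ℓ i ∉ S := by
    intro i hi
    exact Nat.nth_mem_of_lt_card hfin' (by rw [← Set.ncard_eq_toFinset_card (Set.ofPred fun n => n ∉ S) hfin']; change i < genus S; omega)
  have hlb : ∀ i, i < g → i < ℓ i := by
    intro i
    induction i with
    | zero =>
      intro hi
      have h1 := hmem 0 hi
      have : ℓ 0 ≠ 0 := by intro he; exact h1 (by rw [he]; exact h0)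
      omega
    | succ i ih =>
      intro hi
      have h1 := hmono i (i+1) (by omega) hi
      have h2 := ih (by omega)
      omega
  have hg1 : 1 ≤ g := by omega
  -- sums
  set S1 := ∑ i ∈ Finset.range (g-1), (ℓ i - (i+1)) with hS1Def
  have hKw : Kweight S = S1 + g - 1 := by
    rw [Kweight, hg]
    rfl
  set Sl := ∑ i ∈ Finset.range (g-1), ℓ i with hSlDef
  set T := ∑ i ∈ Finset.range (g-1), (i+1) with hTDef
  have f1 : S1 + T = Sl := by
    rw [hS1Def, hTDef, hSlDef, ← Finset.sum_add_distrib]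
    apply Finset.sum_congr rfl
    intro i hi
    rw [Finset.mem_range] at hi
    have := hlb i (by omega)
    omega
  have f2 : 2 * T = g * (g - 1) := by
    have h1 : ∑ i ∈ Finset.range ((g-1)+1), i = T + 0 := Finset.sum_range_succ' id (g-1)
    have h2 : (g-1)+1 = g := by omega
    rw [h2] at h1
    have h3 := Finset.sum_range_id_mul_two g
    omega
  -- image
  set A' := (Finset.range (g-1)).image ℓ with hA'Def
  have hinj : Set.InjOn ℓ (Finset.range (g-1)) := by
    intro i hi j hj hij
    simp only [Finset.coe_range, Set.mem_Iio] at hi hj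
    rcases lt_trichotomy i j with h | h | h
    · exact absurd (hmono i j h (by omega)) (by omega)
    · exact h
    · exact absurd (hmono j i h (by omega)) (by omega)
  have hA'card : A'.card = g - 1 := by
    rw [hA'Def, Finset.card_image_of_injOn hinj, Finset.card_range]
  have hA'sum : ∑ x ∈ A', x = Sl := by
    rw [hA'Def, hSlDef]
    exact Finset.sum_image (fun x hx y hy h => hinj hx hy h)
  have hA'mem : ∀ x ∈ A', x ∉ S ∧ 1 ≤ x := by
    intro x hx
    rw [hA'Def, Finset.mem_image] at hx
    obtain ⟨i, hi, rfl⟩ := hx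
    rw [Finset.mem_range] at hi
    exact ⟨hmem i (by omega), by have := hlb i (by omega); omega⟩
  set E := A'.filter (fun k => k % 2 = 0) with hEDef
  set O := A'.filter (fun k => ¬ k % 2 = 0) with hODef
  have heo : E.card + O.card = A'.card := by
    rw [hEDef, hODef]
    exact Finset.card_filter_add_card_filter_not (s := A') (p := fun k => k % 2 = 0)
  have hsplit := Finset.sum_filter_add_sum_filter_not A' (fun k => k % 2 = 0) (fun x => x)
  have hE_sub : E ⊆ EG := by
    intro k hk
    rw [hEDef, Finset.mem_filter] at hk
    obtain ⟨hkA, hk2⟩ := hk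
    obtain ⟨hkS, hk1⟩ := hA'mem k hkA
    have hk4 : k ≤ 4*γ := by
      by_contra h
      exact hkS (hevens k hk2 (by omega))
    exact hEGmem k (by omega) hk4 hk2 hkS
  have he : E.card ≤ γ := le_trans (Finset.card_le_card hE_sub) (by omega)
  have hOsum : O.card * O.card ≤ ∑ u ∈ O, u := by
    apply sum_odd_ge
    intro u hu
    rw [hODef, Finset.mem_filter] at hu
    omega
  have hEsum : E.card * (E.card + 1) ≤ ∑ u ∈ E, u := by
    apply sum_even_pos_ge
    intro u hu
    rw [hEDef, Finset.mem_filter] at hu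
    exact ⟨hu.2, (hA'mem u hu.1).2⟩
  have f5 : E.card * (E.card + 1) + O.card * O.card ≤ Sl := by
    rw [← hA'sum, ← hsplit]
    exact Nat.add_le_add hEsum hOsum
  -- final arithmetic
  have hch : 2 * Nat.choose (g - 2*γ) 2 = (g - 2*γ) * (g - 2*γ - 1) := by
    rw [Nat.choose_two_right]
    have hdvd : 2 ∣ (g - 2*γ) * (g - 2*γ - 1) := by
      rcases Nat.even_or_odd (g - 2*γ) with h | h
      · exact Dvd.dvd.mul_right h.two_dvd _
      · apply Dvd.dvd.mul_left
        rw [Nat.odd_iff] at h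
        omega
    omega
  clear_value EvIcc EGS EG ℓ S1 Sl T A' E O
  clear hmono hmem hlb hevens hEGmem hE_sub hOsum hEsum hA'mem hA'sum hinj hsplit
    hEGS_card hEG_card hpart hEvIcc_card hbase hp'inf hSinf hcardg hfin' hγ hg
    hEvIccDef hEGSDef hEGDef hℓDef hS1Def hSlDef hTDef hA'Def hEDef hODef
  rw [hKw]
  obtain ⟨n2, hg2⟩ : ∃ n2, g = 2*γ + 1 + n2 := ⟨g - (2*γ+1), by omega⟩
  have hgsub : g - 2*γ = n2 + 1 := by omega
  rw [hgsub] at hch ⊢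
  rw [Nat.add_sub_cancel] at hch
  have hgm1 : g - 1 = 2*γ + n2 := by omega
  rw [hgm1] at f2
  obtain ⟨d, hd⟩ : ∃ d, γ = E.card + d := ⟨γ - E.card, by omega⟩
  have ho' : O.card = E.card + 2*d + n2 := by omega
  rw [ho'] at f5
  have e2 : g * (2*γ + n2) = (2*(E.card+d)+1+n2) * (2*(E.card+d)+n2) := by
    rw [hg2, hd]
  rw [e2] at f2
  have hdd : d ≤ d * d := by
    rcases Nat.eq_zero_or_pos d with h | h
    · simp [h]
    · exact Nat.le_mul_of_pos_left d h
  have hnn : n2 ≤ n2 * n2 := by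
    rcases Nat.eq_zero_or_pos n2 with h | h
    · simp [h]
    · exact Nat.le_mul_of_pos_left n2 h
  have key : 2 * Nat.choose (n2+1) 2 + 4*γ + 2 ≤ 2*S1 + 2*g := by
    nlinarith [f1, f2, f5, hch, hdd]
  omega
end

section
/- Let γ ≥ 0 be an integer and let S be a γ-hyperelliptic numerical semigroup of genus g with g ≥ 2γ+1. Then the K-weight of S satisfies W_K ≤ C(g-2γ, 2) + 2γ², where C(n,2) denotes the binomial coefficient n choose 2. -/
section KweightHelpers
open Finset

private lemma two_mul_choose_two (n : ℕ) : 2 * n.choose 2 + n = n * n := by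
  induction n with
  | zero => simp
  | succ m ih =>
    rw [Nat.choose_succ_succ, Nat.choose_one_right]
    nlinarith [ih]

private lemma card_odd_range (n : ℕ) :
    #((range (2 * n)).filter (fun x => ¬ Even x)) = n := by
  induction n with
  | zero => simp
  | succ m ih =>
    have h2 : 2 * (m + 1) = (2 * m + 1) + 1 := by ring
    have he : Even (2 * m) := even_two_mul m
    have ho : ¬ Even (2 * m + 1) := by
      rintro ⟨k, hk⟩; rcases he with ⟨j, hj⟩; omega
    rw [h2, range_add_one, filter_insert, if_pos ho, range_add_one, filter_insert,
      if_neg (not_not_intro he)]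
    rw [card_insert_of_notMem (by simp only [mem_filter, mem_range]; omega), ih]

private lemma card_even_range_s1 (n : ℕ) :
    #((range (2 * n)).filter (fun x => Even x)) = n := by
  have h := Finset.card_filter_add_card_filter_not
    (s := range (2*n)) (p := fun x => Even x)
  rw [card_range] at h
  have h2 := card_odd_range n
  omega

private lemma sum_filter_lt_card (s : Finset ℕ) :
    ∑ x ∈ s, #(s.filter (· < x)) = s.card.choose 2 := by
  induction s using Finset.induction_on_max with
  | empty => simp
  | insert a s ha ih =>
    have hna : a ∉ s := fun h => lt_irrefl a (ha a h)
    rw [Finset.sum_insert hna]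
    have h1 : (insert a s).filter (· < a) = s := by
      ext x
      simp only [Finset.mem_filter, Finset.mem_insert]
      constructor
      · rintro ⟨rfl | hx, hlt⟩
        · exact absurd hlt (lt_irrefl _)
        · exact hx
      · intro hx; exact ⟨Or.inr hx, ha x hx⟩
    have h2 : ∀ x ∈ s, (insert a s).filter (· < x) = s.filter (· < x) := by
      intro x hx
      ext y
      simp only [Finset.mem_filter, Finset.mem_insert]
      constructor
      · rintro ⟨rfl | hy, hlt⟩
        · exact absurd (hlt.trans (ha x hx)) (lt_irrefl _)
        · exact ⟨hy, hlt⟩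
      · rintro ⟨hy, hlt⟩; exact ⟨Or.inr hy, hlt⟩
    rw [h1, Finset.sum_congr rfl (fun x hx => by rw [h2 x hx]), ih,
      Finset.card_insert_of_notMem hna, Nat.choose_succ_succ, Nat.choose_one_right,
      Nat.add_comm]

private lemma pair_count (s t : Finset ℕ) (hst : ∀ x ∈ s, ∀ y ∈ t, x ≠ y) :
    ((∑ y ∈ t, #(s.filter (· < y))) + ∑ x ∈ s, #(t.filter (· < x))) = s.card * t.card := by
  have h1 : ∑ y ∈ t, #(s.filter (· < y)) = ∑ x ∈ s, ∑ y ∈ t, if x < y then 1 else 0 := by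
    rw [Finset.sum_comm]
    exact Finset.sum_congr rfl fun y _ => by rw [card_filter]
  have h2 : ∑ x ∈ s, #(t.filter (· < x)) = ∑ x ∈ s, ∑ y ∈ t, if y < x then 1 else 0 :=
    Finset.sum_congr rfl fun x _ => by rw [card_filter]
  rw [h1, h2, ← Finset.sum_add_distrib]
  have h3 : ∀ x ∈ s, ((∑ y ∈ t, if x < y then 1 else 0) + ∑ y ∈ t, if y < x then 1 else 0)
      = t.card := by
    intro x hx
    rw [← Finset.sum_add_distrib, Finset.card_eq_sum_ones]
    refine Finset.sum_congr rfl fun y hy => ?_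
    rcases lt_trichotomy x y with h | h | h
    · simp [h, asymm h]
    · exact absurd h (hst x hx y hy)
    · simp [h, asymm h]
  rw [Finset.sum_congr rfl h3, Finset.sum_const, smul_eq_mul]

private lemma card_product_filter (s t : Finset ℕ) (pr : ℕ → ℕ → Prop)
    [∀ x y, Decidable (pr x y)] :
    #((s ×ˢ t).filter (fun z => pr z.1 z.2)) = ∑ x ∈ s, #(t.filter (fun y => pr x y)) := by
  rw [card_filter, Finset.sum_product]
  exact Finset.sum_congr rfl fun x _ => by rw [card_filter]

end KweightHelpers

open Finset in
theorem Kweight_upper_bound (γ g : ℕ) (S : Set ℕ)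
    (hS : IsNumericalSemigroup S) (hγ : GammaHyperelliptic γ S)
    (hg : genus S = g) (hgen : 2 * γ + 1 ≤ g) :
    Kweight S ≤ Nat.choose (g - 2 * γ) 2 + 2 * γ ^ 2 := by
  classical
  obtain ⟨h0, hadd, hfin⟩ := hS
  obtain ⟨hev, hnth⟩ := hγ
  set p : ℕ → Prop := fun n => n ∉ S with hp
  have hfinp : (setOf p).Finite := hfin
  set L : Finset ℕ := hfinp.toFinset with hLdef
  have hmemL : ∀ x : ℕ, x ∈ L ↔ x ∉ S := fun x => hfinp.mem_toFinset
  have hgL : L.card = g := by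
    rw [← hg, genus, Set.ncard_eq_toFinset_card _ hfin]; rfl
  set q : ℕ → Prop := fun n => n ∈ S ∧ n ≠ 0 with hq
  have hqinf : (setOf q).Infinite := by
    have hfq : (setOf q)ᶜ.Finite := by
      apply Set.Finite.subset (hfin.union (Set.finite_singleton 0))
      intro x hx
      simp only [Set.mem_compl_iff, setOf, Set.mem_setOf_eq, hq, not_and_or, not_not,
        not_ne_iff] at hx
      rcases hx with h | h
      · exact Or.inl h
      · exact Or.inr (by simp [h])
    simpa using hfq.infinite_compl
  have h42S : (4 * γ + 2) ∈ S := by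
    have h := Nat.nth_mem_of_infinite hqinf γ
    rw [hnth] at h
    exact h.1
  have hcnt42 : #((range (4 * γ + 2)).filter q) = γ := by
    have h1 := Nat.count_nth_of_infinite hqinf γ
    rw [hnth, Nat.count_eq_card_filter_range] at h1
    exact h1
  have hEV : #((range (4 * γ + 2)).filter (fun n => q n ∧ Even n)) = γ := by
    have hseteq : {n : ℕ | n ∈ Set.Icc 2 (4 * γ) ∧ Even n ∧ n ∈ S}
        = ↑((range (4 * γ + 2)).filter (fun n => q n ∧ Even n)) := by
      ext n
      simp only [Set.mem_setOf_eq, Set.mem_Icc, coe_filter, mem_range, hq]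
      constructor
      · rintro ⟨⟨h2, h4⟩, he, hs⟩
        exact ⟨by omega, ⟨hs, by omega⟩, he⟩
      · rintro ⟨hlt, ⟨hs, h0'⟩, he⟩
        rcases he with ⟨k, hk⟩
        exact ⟨⟨by omega, by omega⟩, ⟨k, hk⟩, hs⟩
    rw [hseteq, Set.ncard_coe_finset] at hev
    exact hev
  have hEVeq : (range (4*γ+2)).filter q = (range (4*γ+2)).filter (fun n => q n ∧ Even n) := by
    refine (eq_of_subset_of_card_le ?_ (by rw [hcnt42, hEV])).symm
    intro x hx
    simp only [mem_filter] at hx ⊢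
    exact ⟨hx.1, hx.2.1⟩
  have hsmall : ∀ x, x ∈ S → x ≠ 0 → x < 4*γ+2 → Even x := by
    intro x hs h0' hlt
    have hx : x ∈ (range (4*γ+2)).filter q := by
      simp only [mem_filter, mem_range, hq]
      exact ⟨hlt, hs, h0'⟩
    rw [hEVeq] at hx
    exact (mem_filter.mp hx).2.2
  have hodd_not : ∀ x : ℕ, ¬ Even x → x < 4*γ+2 → x ∉ S := by
    intro x ho hlt hs
    exact ho (hsmall x hs (by rintro rfl; exact ho Even.zero) hlt)
  have h1L : (1:ℕ) ∈ L := (hmemL 1).mpr (hodd_not 1 (by rintro ⟨k, hk⟩; omega) (by omega))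
  have hLne : L.Nonempty := ⟨1, h1L⟩
  set F : ℕ := L.max' hLne with hF
  have hFS : F ∉ S := (hmemL F).mp (L.max'_mem hLne)
  have hle_F : ∀ x, x ∉ S → x ≤ F := fun x hx => L.le_max' x ((hmemL x).mpr hx)
  have h41S : (4*γ+1) ∉ S := hodd_not _ (by rintro ⟨k, hk⟩; omega) (by omega)
  have hF41 : 4*γ+1 ≤ F := hle_F _ h41S
  set E : Finset ℕ := L.filter (fun n => Even n) with hE
  set O : Finset ℕ := L.filter (fun n => ¬ Even n) with hO
  have hEOcard : E.card + O.card = g := by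
    rw [hE, hO, card_filter_add_card_filter_not, hgL]
  have hmemE : ∀ x, x ∈ E ↔ (x ∉ S ∧ Even x) := by
    intro x
    rw [hE, mem_filter, hmemL]
  have hmemO : ∀ x, x ∈ O ↔ (x ∉ S ∧ ¬ Even x) := by
    intro x
    rw [hO, mem_filter, hmemL]
  -- element counting functions
  set aE : ℕ → ℕ := fun m => #((range m).filter (fun x => x ∈ S ∧ x ≠ 0 ∧ Even x)) with haE
  set aO : ℕ → ℕ := fun m => #((range m).filter (fun x => x ∈ S ∧ ¬ Even x)) with haO
  set a : ℕ → ℕ := fun m => #((range m).filter (fun x => x ∈ S ∧ x ≠ 0)) with ha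
  have ha_split : ∀ m, a m = aE m + aO m := by
    intro m
    show #((range m).filter (fun x => x ∈ S ∧ x ≠ 0))
      = #((range m).filter (fun x => x ∈ S ∧ x ≠ 0 ∧ Even x))
        + #((range m).filter (fun x => x ∈ S ∧ ¬ Even x))
    have hun : (range m).filter (fun x => x ∈ S ∧ x ≠ 0)
        = ((range m).filter (fun x => x ∈ S ∧ x ≠ 0 ∧ Even x))
          ∪ ((range m).filter (fun x => x ∈ S ∧ ¬ Even x)) := by
      ext x
      simp only [mem_filter, mem_union, mem_range]
      constructor
      · rintro ⟨hx, hs, h0'⟩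
        by_cases he : Even x
        · exact Or.inl ⟨hx, hs, h0', he⟩
        · exact Or.inr ⟨hx, hs, he⟩
      · rintro (⟨hx, hs, h0', _⟩ | ⟨hx, hs, he⟩)
        · exact ⟨hx, hs, h0'⟩
        · exact ⟨hx, hs, by rintro rfl; exact he Even.zero⟩
    have hdisj : Disjoint ((range m).filter (fun x => x ∈ S ∧ x ≠ 0 ∧ Even x))
        ((range m).filter (fun x => x ∈ S ∧ ¬ Even x)) := by
      rw [Finset.disjoint_left]
      intro x hx hy
      simp only [mem_filter] at hx hy
      exact hy.2.2 hx.2.2.2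
    rw [hun, card_union_of_disjoint hdisj]
  -- Nat.nth machinery
  have hltcard : ∀ i, i < g → ∀ hf : (setOf p).Finite, i < #hf.toFinset := by
    intro i hi hf
    rw [Subsingleton.elim hf hfinp]
    rw [← hLdef, hgL]
    exact hi
  have hnthS : ∀ i, i < g → (Nat.nth p i) ∉ S := fun i hi => Nat.nth_mem i (hltcard i hi)
  have hcount_nth : ∀ i, i < g → #((range (Nat.nth p i)).filter p) = i := by
    intro i hi
    rw [← Nat.count_eq_card_filter_range]
    exact Nat.count_nth (hltcard i hi)
  have hterm : ∀ i, i < g → a (Nat.nth p i) + (i+1) = Nat.nth p i := by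
    intro i hi
    have hpx : Nat.nth p i ∉ S := hnthS i hi
    have hx0 : Nat.nth p i ≠ 0 := by rintro h; rw [h] at hpx; exact hpx h0
    have hcnt := hcount_nth i hi
    have hpart := Finset.card_filter_add_card_filter_not
      (s := range (Nat.nth p i)) (p := p)
    rw [card_range, hcnt] at hpart
    have hins : (range (Nat.nth p i)).filter (fun y => ¬ p y)
        = insert 0 ((range (Nat.nth p i)).filter (fun y => y ∈ S ∧ y ≠ 0)) := by
      ext y
      simp only [mem_filter, mem_insert, mem_range, hp, not_not]
      constructor
      · rintro ⟨hy, hys⟩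
        by_cases h' : y = 0
        · exact Or.inl h'
        · exact Or.inr ⟨hy, hys, h'⟩
      · rintro (rfl | ⟨hy, hys, _⟩)
        · exact ⟨Nat.pos_of_ne_zero hx0, h0⟩
        · exact ⟨hy, hys⟩
    rw [hins, card_insert_of_notMem (by simp)] at hpart
    have : a (Nat.nth p i) = #((range (Nat.nth p i)).filter (fun y => y ∈ S ∧ y ≠ 0)) := rfl
    omega
  have hcF : #((range F).filter p) = g - 1 := by
    have hfe : (range F).filter p = L.erase F := by
      ext x
      simp only [mem_filter, mem_range, mem_erase, hmemL, hp]
      constructor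
      · rintro ⟨hx, hxs⟩
        exact ⟨by omega, hxs⟩
      · rintro ⟨hne, hxs⟩
        exact ⟨lt_of_le_of_ne (hle_F x hxs) hne, hxs⟩
    rw [hfe, card_erase_of_mem (L.max'_mem hLne), hgL]
  have hlast : Nat.nth p (g-1) = F := by
    have h1 := Nat.nth_count (p := p) (n := F) hFS
    rw [Nat.count_eq_card_filter_range, hcF] at h1
    exact h1
  have hsum_all : ∑ i ∈ range g, a (Nat.nth p i) = ∑ ℓ ∈ L, a ℓ := by
    apply Finset.sum_nbij' (i := fun i => Nat.nth p i) (j := fun ℓ => Nat.count p ℓ)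
    · intro i hi
      exact (hmemL _).mpr (hnthS i (mem_range.mp hi))
    · intro ℓ hℓ
      rw [mem_range]
      have hsub : (range ℓ).filter p ⊆ L.erase ℓ := by
        intro x hx
        simp only [mem_filter, mem_range, hp] at hx
        simp only [mem_erase, hmemL, hp]
        exact ⟨by omega, hx.2⟩
      have := (card_le_card hsub).trans_eq (card_erase_of_mem hℓ)
      rw [← Nat.count_eq_card_filter_range] at this
      rw [hgL] at this
      simp only [hp]
      omega
    · intro i hi
      exact Nat.count_nth (hltcard i (mem_range.mp hi))
    · intro ℓ hℓ
      exact Nat.nth_count ((hmemL ℓ).mp hℓ)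
    · intro i _
      rfl
  have hKW : Kweight S + (a F + 1) = (∑ ℓ ∈ L, a ℓ) + g := by
    have hg1 : Kweight S = (∑ i ∈ range (g-1), (gap S i - (i + 1))) + g - 1 := by
      rw [Kweight, hg]
    have hterms : ∀ i ∈ range (g-1), gap S i - (i+1) = a (Nat.nth p i) := by
      intro i hi
      rw [mem_range] at hi
      have := hterm i (by omega)
      show Nat.nth p i - (i+1) = a (Nat.nth p i)
      omega
    rw [Finset.sum_congr rfl hterms] at hg1
    have hsplit : ∑ i ∈ range g, a (Nat.nth p i)
        = (∑ i ∈ range (g-1), a (Nat.nth p i)) + a F := by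
      have hgg : g = (g - 1) + 1 := by omega
      rw [hgg, sum_range_succ, ← hgg, hlast]
    omega
  -- even gap structure
  have heven_part : ∀ ε ∈ E, ε = 2 * (1 + aE ε + #(E.filter (· < ε))) := by
    intro ε hε
    obtain ⟨hεS, hεev⟩ := (hmemE ε).mp hε
    obtain ⟨m, hm⟩ := hεev
    have hε0 : ε ≠ 0 := by rintro rfl; exact hεS h0
    have hcardEv : #((range ε).filter (fun x => Even x)) = m := by
      rw [show ε = 2*m by omega]
      exact card_even_range_s1 m
    have hpart := Finset.card_filter_add_card_filter_not
      (s := (range ε).filter (fun x => Even x)) (p := fun x => x ∈ S)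
    rw [filter_filter, filter_filter, hcardEv] at hpart
    have h2 : (range ε).filter (fun x => Even x ∧ ¬ x ∈ S) = E.filter (· < ε) := by
      ext x
      simp only [mem_filter, mem_range, hmemE]
      constructor
      · rintro ⟨hxε, hxe, hxS⟩; exact ⟨⟨hxS, hxe⟩, hxε⟩
      · rintro ⟨⟨hxS, hxe⟩, hxε⟩; exact ⟨hxε, hxe, hxS⟩
    have h3 : (range ε).filter (fun x => Even x ∧ x ∈ S)
        = insert 0 ((range ε).filter (fun x => x ∈ S ∧ x ≠ 0 ∧ Even x)) := by
      ext x
      simp only [mem_filter, mem_range, mem_insert]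
      constructor
      · rintro ⟨hxε, hxe, hxS⟩
        by_cases h' : x = 0
        · exact Or.inl h'
        · exact Or.inr ⟨hxε, hxS, h', hxe⟩
      · rintro (rfl | ⟨hxε, hxS, _, hxe⟩)
        · exact ⟨by omega, Even.zero, h0⟩
        · exact ⟨hxε, hxe, hxS⟩
    rw [h2, h3, card_insert_of_notMem (by simp)] at hpart
    have haEε : aE ε = #((range ε).filter (fun x => x ∈ S ∧ x ≠ 0 ∧ Even x)) := rfl
    omega
  have hEE : ∀ ε ∈ E, aE ε ≤ #(E.filter (· < ε)) := by
    intro ε hε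
    obtain ⟨hεS, hεev⟩ := (hmemE ε).mp hε
    obtain ⟨m, hm⟩ := hεev
    apply card_le_card_of_injOn (fun x => ε - x)
    · intro x hx
      simp only [mem_coe, mem_filter, mem_range] at hx
      obtain ⟨hxε, hxS, hx0, k, hk⟩ := hx
      simp only [mem_coe, mem_filter, hmemE]
      refine ⟨⟨?_, ⟨m - k, by omega⟩⟩, by omega⟩
      intro hcon
      have h' := hadd x hxS (ε - x) hcon
      rw [Nat.add_sub_cancel' (le_of_lt hxε)] at h'
      exact hεS h'
    · intro x hx y hy hxy
      simp only [coe_filter, Set.mem_setOf_eq, mem_range] at hx hy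
      try simp only at hxy
      omega
  have hpair : ∀ ε ∈ E, ε ≤ 4 * #(E.filter (· < ε)) + 2 := by
    intro ε hε
    have h1 := heven_part ε hε
    have h2 := hEE ε hε
    omega
  have hE4γcard : #(E.filter (· ≤ 4*γ)) = γ := by
    have hc1 : #((range (4*γ+2)).filter (fun x => Even x)) = 2*γ+1 := by
      rw [show 4*γ+2 = 2*(2*γ+1) by ring]
      exact card_even_range_s1 _
    have hpart := Finset.card_filter_add_card_filter_not
      (s := (range (4*γ+2)).filter (fun x => Even x)) (p := fun x => x ∈ S)
    rw [filter_filter, filter_filter, hc1] at hpart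
    have h2 : (range (4*γ+2)).filter (fun x => Even x ∧ x ∈ S)
        = insert 0 ((range (4*γ+2)).filter (fun n => q n ∧ Even n)) := by
      ext x
      simp only [mem_filter, mem_range, mem_insert, hq]
      constructor
      · rintro ⟨hxlt, hxe, hxS⟩
        by_cases h' : x = 0
        · exact Or.inl h'
        · exact Or.inr ⟨hxlt, ⟨hxS, h'⟩, hxe⟩
      · rintro (rfl | ⟨hxlt, ⟨hxS, _⟩, hxe⟩)
        · exact ⟨by omega, Even.zero, h0⟩
        · exact ⟨hxlt, hxe, hxS⟩
    have h3 : (range (4*γ+2)).filter (fun x => Even x ∧ ¬ x ∈ S) = E.filter (· ≤ 4*γ) := by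
      ext x
      simp only [mem_filter, mem_range, hmemE]
      constructor
      · rintro ⟨hxlt, hxe, hxS⟩
        obtain ⟨k, hk⟩ := hxe
        exact ⟨⟨hxS, ⟨k, hk⟩⟩, by omega⟩
      · rintro ⟨⟨hxS, hxe⟩, hxle⟩
        exact ⟨by omega, hxe, hxS⟩
    rw [h2, h3, card_insert_of_notMem (by simp [hq]), hEV] at hpart
    omega
  have hE42 : ∀ ε ∈ E, ε ≤ 4*γ := by
    by_contra hcon
    push_neg at hcon
    obtain ⟨ε, hε, hgt⟩ := hcon
    have hne : (E.filter (fun x => 4*γ < x)).Nonempty := ⟨ε, mem_filter.mpr ⟨hε, hgt⟩⟩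
    set ε0 := (E.filter (fun x => 4*γ < x)).min' hne with hε0
    have hε0mem := (E.filter (fun x => 4*γ < x)).min'_mem hne
    rw [mem_filter] at hε0mem
    obtain ⟨hε0E, hε0gt⟩ := hε0mem
    have hsub : E.filter (· ≤ ε0) ⊆ insert ε0 (E.filter (· ≤ 4*γ)) := by
      intro x hx
      simp only [mem_filter, mem_insert] at hx ⊢
      obtain ⟨hxE, hxle⟩ := hx
      by_cases h4 : x ≤ 4*γ
      · exact Or.inr ⟨hxE, h4⟩
      · left
        have hxb : x ∈ E.filter (fun x => 4*γ < x) := mem_filter.mpr ⟨hxE, by omega⟩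
        have := (E.filter (fun x => 4*γ < x)).min'_le x hxb
        omega
    have hcard1 : #(E.filter (· ≤ ε0)) ≤ γ + 1 := by
      calc #(E.filter (· ≤ ε0)) ≤ #(insert ε0 (E.filter (· ≤ 4*γ))) := card_le_card hsub
        _ ≤ #(E.filter (· ≤ 4*γ)) + 1 := card_insert_le _ _
        _ = γ + 1 := by rw [hE4γcard]
    have hcard2 : #(E.filter (· < ε0)) + 1 ≤ #(E.filter (· ≤ ε0)) := by
      have hsub2 : insert ε0 (E.filter (· < ε0)) ⊆ E.filter (· ≤ ε0) := by
        intro x hx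
        simp only [mem_insert, mem_filter] at hx ⊢
        rcases hx with rfl | ⟨hxE, hxlt⟩
        · exact ⟨hε0E, le_refl _⟩
        · exact ⟨hxE, le_of_lt hxlt⟩
      calc #(E.filter (· < ε0)) + 1
          = #(insert ε0 (E.filter (· < ε0))) :=
            (card_insert_of_notMem (by simp)).symm
        _ ≤ #(E.filter (· ≤ ε0)) := card_le_card hsub2
    have hp0 := hpair ε0 hε0E
    obtain ⟨hε0S, hε0ev⟩ := (hmemE ε0).mp hε0E
    obtain ⟨k, hk⟩ := hε0ev
    have : ε0 = 4*γ+2 := by omega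
    rw [this] at hε0S
    exact hε0S h42S
  have hEcard : E.card = γ := by
    rw [← hE4γcard]
    congr 1
    exact (filter_true_of_mem (fun x hx => hE42 x hx)).symm
  have hFodd : ¬ Even F := by
    intro he
    have hFE : F ∈ E := (hmemE F).mpr ⟨hFS, he⟩
    have := hE42 F hFE
    omega
  have haO0 : ∀ ε ∈ E, aO ε = 0 := by
    intro ε hε
    have : aO ε = #((range ε).filter (fun x => x ∈ S ∧ ¬ Even x)) := rfl
    rw [this, card_eq_zero, filter_eq_empty_iff]
    intro x hx hcon
    rw [mem_range] at hx
    have := hE42 ε hε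
    exact hodd_not x hcon.2 (by omega) hcon.1
  have hOcount : ∀ ε ∈ E, 2 * #(O.filter (· < ε)) = ε := by
    intro ε hε
    obtain ⟨hεS, hεev⟩ := (hmemE ε).mp hε
    obtain ⟨m, hm⟩ := hεev
    have hOε : O.filter (· < ε) = (range (2*m)).filter (fun x => ¬ Even x) := by
      ext x
      simp only [mem_filter, hmemO, mem_range]
      constructor
      · rintro ⟨⟨hxS, hxo⟩, hxε⟩
        exact ⟨by omega, hxo⟩
      · rintro ⟨hxlt, hxo⟩
        have hxS : x ∉ S := hodd_not x hxo (by have := hE42 ε hε; omega)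
        exact ⟨⟨hxS, hxo⟩, by omega⟩
    rw [hOε, card_odd_range]
    omega
  -- odd elements below F
  set R : Finset ℕ := (range F).filter (fun x => x ∈ S ∧ ¬ Even x) with hR
  have hmemR : ∀ x, x ∈ R ↔ (x < F ∧ x ∈ S ∧ ¬ Even x) := by
    intro x
    rw [hR, mem_filter, mem_range]
  obtain ⟨b, hb⟩ : Odd F := by
    rcases Nat.even_or_odd F with h | h
    · exact absurd h hFodd
    · exact h
  have hrγ : R.card ≤ E.card := by
    apply card_le_card_of_injOn (fun s => F - s)
    · intro x hx
      rw [mem_coe, hmemR] at hx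
      obtain ⟨hxF, hxS, hxo⟩ := hx
      simp only [mem_coe, hmemE]
      constructor
      · intro hcon
        have h' := hadd x hxS (F - x) hcon
        rw [Nat.add_sub_cancel' (le_of_lt hxF)] at h'
        exact hFS h'
      · obtain ⟨c, hc⟩ : Odd x := by
          rcases Nat.even_or_odd x with h | h
          · exact absurd h hxo
          · exact h
        exact ⟨b - c, by omega⟩
    · intro x hx y hy hxy
      rw [mem_coe, hmemR] at hx hy
      try simp only at hxy
      omega
  have hFr : F + 1 = 2 * (O.card + R.card) := by
    have hodds := card_odd_range (b+1)
    have hparts : (range (2*(b+1))).filter (fun x => ¬ Even x) = O ∪ R := by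
      ext x
      simp only [mem_filter, mem_range, mem_union, hmemO, hmemR]
      constructor
      · rintro ⟨hxlt, hxo⟩
        by_cases hxS : x ∈ S
        · have hxF : x ≠ F := by rintro rfl; exact hFS hxS
          exact Or.inr ⟨by omega, hxS, hxo⟩
        · exact Or.inl ⟨hxS, hxo⟩
      · rintro (⟨hxS, hxo⟩ | ⟨hxF, hxS, hxo⟩)
        · have := hle_F x hxS
          exact ⟨by omega, hxo⟩
        · exact ⟨by omega, hxo⟩
    have hdisjOR : Disjoint O R := by
      rw [Finset.disjoint_left]
      intro x hx hx'
      exact ((hmemO x).mp hx).1 ((hmemR x).mp hx').2.1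
    rw [hparts, card_union_of_disjoint hdisjOR] at hodds
    omega
  -- the grand sum decomposition
  have hWsplit : ∑ ℓ ∈ L, a ℓ = (∑ ε ∈ E, aE ε) + ((∑ μ ∈ O, aE μ) + ∑ μ ∈ O, aO μ) := by
    rw [Finset.sum_congr rfl (fun ℓ _ => ha_split ℓ), Finset.sum_add_distrib]
    have h1 : ∑ ℓ ∈ L, aE ℓ = (∑ ε ∈ E, aE ε) + ∑ μ ∈ O, aE μ := by
      rw [hE, hO, Finset.sum_filter_add_sum_filter_not L (fun n => Even n) aE]
    have h2 : ∑ ℓ ∈ L, aO ℓ = (∑ ε ∈ E, aO ε) + ∑ μ ∈ O, aO μ := by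
      rw [hE, hO, Finset.sum_filter_add_sum_filter_not L (fun n => Even n) aO]
    rw [h1, h2, Finset.sum_eq_zero haO0, zero_add]
    omega
  have hkey : ∀ μ ∈ O, aE μ + #(E.filter (· < μ))
      ≤ #(O.filter (· < μ)) + #(E.filter (fun ε => ε < μ ∧ μ - ε ∈ S)) := by
    intro μ hμ
    obtain ⟨hμS, hμo⟩ := (hmemO μ).mp hμ
    obtain ⟨d, hd⟩ : Odd μ := by
      rcases Nat.even_or_odd μ with h | h
      · exact absurd h hμo
      · exact h
    set D := (range μ).filter (fun x => Even x ∧ x ≠ 0 ∧ μ - x ∉ S) with hD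
    have hDsplit : #D = aE μ + #(E.filter (fun ε => ε < μ ∧ μ - ε ∉ S)) := by
      have hpart := Finset.card_filter_add_card_filter_not
        (s := D) (p := fun x => x ∈ S)
      have hDin : D.filter (fun x => x ∈ S)
          = (range μ).filter (fun x => x ∈ S ∧ x ≠ 0 ∧ Even x) := by
        ext x
        simp only [hD, filter_filter, mem_filter, mem_range]
        constructor
        · rintro ⟨hxμ, ⟨hxe, hx0, hxg⟩, hxS⟩
          exact ⟨hxμ, hxS, hx0, hxe⟩
        · rintro ⟨hxμ, hxS, hx0, hxe⟩
          refine ⟨hxμ, ⟨hxe, hx0, ?_⟩, hxS⟩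
          intro hcon
          have h' := hadd x hxS (μ - x) hcon
          rw [Nat.add_sub_cancel' (le_of_lt hxμ)] at h'
          exact hμS h'
      have hDout : D.filter (fun x => ¬ x ∈ S)
          = E.filter (fun ε => ε < μ ∧ μ - ε ∉ S) := by
        ext x
        simp only [hD, filter_filter, mem_filter, mem_range, hmemE]
        constructor
        · rintro ⟨hxμ, ⟨hxe, hx0, hxg⟩, hxS⟩
          exact ⟨⟨hxS, hxe⟩, hxμ, hxg⟩
        · rintro ⟨⟨hxS, hxe⟩, hxμ, hxg⟩
          have hx0 : x ≠ 0 := by rintro rfl; exact hxS h0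
          exact ⟨hxμ, ⟨hxe, hx0, hxg⟩, hxS⟩
      rw [hDin, hDout] at hpart
      have haEμ : aE μ = #((range μ).filter (fun x => x ∈ S ∧ x ≠ 0 ∧ Even x)) := rfl
      omega
    have hEsplit : #(E.filter (· < μ))
        = #(E.filter (fun ε => ε < μ ∧ μ - ε ∉ S))
          + #(E.filter (fun ε => ε < μ ∧ μ - ε ∈ S)) := by
      have hpart := Finset.card_filter_add_card_filter_not
        (s := E.filter (· < μ)) (p := fun ε => μ - ε ∈ S)
      have ha' : (E.filter (· < μ)).filter (fun ε => μ - ε ∈ S)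
          = E.filter (fun ε => ε < μ ∧ μ - ε ∈ S) := by
        ext x
        simp only [mem_filter]
        tauto
      have hb' : (E.filter (· < μ)).filter (fun ε => ¬ μ - ε ∈ S)
          = E.filter (fun ε => ε < μ ∧ μ - ε ∉ S) := by
        ext x
        simp only [mem_filter]
        tauto
      rw [ha', hb'] at hpart
      omega
    have hDO : #D ≤ #(O.filter (· < μ)) := by
      apply card_le_card_of_injOn (fun x => μ - x)
      · intro x hx
        simp only [hD, mem_coe, mem_filter, mem_range] at hx
        obtain ⟨hxμ, hxe, hx0, hxg⟩ := hx
        simp only [mem_coe, mem_filter, hmemO]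
        obtain ⟨c, hc⟩ := hxe
        refine ⟨⟨hxg, ?_⟩, by omega⟩
        rintro ⟨e', he'⟩
        omega
      · intro x hx y hy hxy
        simp only [hD, coe_filter, Set.mem_setOf_eq, mem_range] at hx hy
        try simp only at hxy
        omega
    omega
  have hcaO : ∀ μ ∈ O, #(E.filter (fun ε => ε < μ ∧ μ - ε ∈ S)) = aO μ := by
    intro μ hμ
    obtain ⟨hμS, hμo⟩ := (hmemO μ).mp hμ
    obtain ⟨d, hd⟩ : Odd μ := by
      rcases Nat.even_or_odd μ with h | h
      · exact absurd h hμo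
      · exact h
    have haOμ : aO μ = #((range μ).filter (fun x => x ∈ S ∧ ¬ Even x)) := rfl
    rw [haOμ]
    apply card_nbij' (i := fun ε => μ - ε) (j := fun s => μ - s)
    · intro ε hε
      rw [mem_coe, mem_filter] at hε
      obtain ⟨hεE, hεlt, hεS'⟩ := hε
      obtain ⟨hεgap, hεev⟩ := (hmemE ε).mp hεE
      have hε0 : ε ≠ 0 := by rintro rfl; exact hεgap h0
      simp only [mem_coe, mem_filter, mem_range]
      obtain ⟨c, hc⟩ := hεev
      refine ⟨by omega, hεS', ?_⟩
      rintro ⟨e', he'⟩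
      omega
    · intro x hx
      simp only [mem_coe, mem_filter, mem_range] at hx
      obtain ⟨hxμ, hxS, hxo⟩ := hx
      obtain ⟨c, hc⟩ : Odd x := by
        rcases Nat.even_or_odd x with h | h
        · exact absurd h hxo
        · exact h
      simp only [mem_coe, mem_filter, hmemE]
      refine ⟨⟨?_, ⟨d - c, by omega⟩⟩, by omega, ?_⟩
      · intro hcon
        have h' := hadd x hxS (μ - x) hcon
        rw [Nat.add_sub_cancel' (le_of_lt hxμ)] at h'
        exact hμS h'
      · rw [Nat.sub_sub_self (le_of_lt hxμ)]
        exact hxS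
    · intro ε hε
      rw [mem_coe, mem_filter] at hε
      have : ε ≤ μ := le_of_lt hε.2.1
      beta_reduce; omega
    · intro x hx
      simp only [mem_coe, mem_filter, mem_range] at hx
      beta_reduce; omega
  have hsum_key : (∑ μ ∈ O, aE μ) + (∑ μ ∈ O, #(E.filter (· < μ)))
      ≤ O.card.choose 2 + ∑ μ ∈ O, aO μ := by
    have h1 : ∀ μ ∈ O, aE μ + #(E.filter (· < μ)) ≤ #(O.filter (· < μ)) + aO μ := by
      intro μ hμ
      have h' := hkey μ hμ
      rw [hcaO μ hμ] at h'
      exact h'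
    calc (∑ μ ∈ O, aE μ) + (∑ μ ∈ O, #(E.filter (· < μ)))
        = ∑ μ ∈ O, (aE μ + #(E.filter (· < μ))) := Finset.sum_add_distrib.symm
      _ ≤ ∑ μ ∈ O, (#(O.filter (· < μ)) + aO μ) := Finset.sum_le_sum h1
      _ = O.card.choose 2 + ∑ μ ∈ O, aO μ := by
          rw [Finset.sum_add_distrib, sum_filter_lt_card]
  have hAee : (∑ ε ∈ E, aE ε) ≤ γ.choose 2 := by
    calc ∑ ε ∈ E, aE ε ≤ ∑ ε ∈ E, #(E.filter (· < ε)) := Finset.sum_le_sum hEE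
      _ = E.card.choose 2 := sum_filter_lt_card E
      _ = γ.choose 2 := by rw [hEcard]
  have hSeSh : (∑ μ ∈ O, #(E.filter (· < μ))) + (∑ ε ∈ E, #(O.filter (· < ε)))
      = γ * O.card := by
    have h' := pair_count E O (fun x hx y hy => by
      obtain ⟨_, hxe⟩ := (hmemE x).mp hx
      obtain ⟨_, hyo⟩ := (hmemO y).mp hy
      rintro rfl
      exact hyo hxe)
    rw [hEcard] at h'
    exact h'
  have hSh : 2 * (∑ ε ∈ E, #(O.filter (· < ε))) ≤ 2 * (γ * γ) := by
    have h1 : ∀ ε ∈ E, 2 * #(O.filter (· < ε)) ≤ 4 * #(E.filter (· < ε)) + 2 := by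
      intro ε hε
      rw [hOcount ε hε]
      exact hpair ε hε
    have h2 := Finset.sum_le_sum h1
    rw [← Finset.mul_sum, Finset.sum_add_distrib, ← Finset.mul_sum,
      sum_filter_lt_card, Finset.sum_const, smul_eq_mul, hEcard] at h2
    have h3 := two_mul_choose_two γ
    omega
  -- bound on B via pairs of even gaps
  have haOR : ∀ μ ∈ O, aO μ = #(R.filter (· < μ)) := by
    intro μ hμ
    obtain ⟨hμS, _⟩ := (hmemO μ).mp hμ
    have hμF : μ ≤ F := hle_F μ hμS
    have h' : aO μ = #((range μ).filter (fun x => x ∈ S ∧ ¬ Even x)) := rfl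
    rw [h']
    congr 1
    ext x
    simp only [mem_filter, mem_range, hmemR]
    constructor
    · rintro ⟨hxμ, hxS, hxo⟩
      exact ⟨⟨by omega, hxS, hxo⟩, hxμ⟩
    · rintro ⟨⟨hxF, hxS, hxo⟩, hxμ⟩
      exact ⟨hxμ, hxS, hxo⟩
  have hBP : (∑ μ ∈ O, aO μ) = #((O ×ˢ R).filter (fun z => z.2 < z.1)) := by
    rw [card_product_filter O R (fun x y => y < x)]
    exact Finset.sum_congr rfl haOR
  set E0 : Finset ℕ := R.image (fun s => F - s) with hE0
  have hE0E : E0 ⊆ E := by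
    intro x hx
    rw [hE0, mem_image] at hx
    obtain ⟨s, hs, rfl⟩ := hx
    rw [hmemR] at hs
    obtain ⟨hsF, hsS, hso⟩ := hs
    rw [hmemE]
    constructor
    · intro hcon
      have h' := hadd s hsS (F - s) hcon
      rw [Nat.add_sub_cancel' (le_of_lt hsF)] at h'
      exact hFS h'
    · obtain ⟨c, hc⟩ : Odd s := by
        rcases Nat.even_or_odd s with h | h
        · exact absurd h hso
        · exact h
      exact ⟨b - c, by omega⟩
  have hE0card : E0.card = R.card := by
    rw [hE0]
    apply card_image_of_injOn
    intro x hx y hy hxy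
    rw [mem_coe, hmemR] at hx hy
    try simp only at hxy
    omega
  have hPE : #((E0 ×ˢ E).filter (fun z => z.2 ≤ z.1)) = ∑ e1 ∈ E0, #(E.filter (· ≤ e1)) :=
    card_product_filter E0 E (fun x y => y ≤ x)
  have hBinj : #((O ×ˢ R).filter (fun z => z.2 < z.1))
      ≤ #((E0 ×ˢ E).filter (fun z => z.2 ≤ z.1)) := by
    apply card_le_card_of_injOn (fun z => (F - z.2, z.1 - z.2))
    · intro z hz
      rw [mem_coe, mem_filter, Finset.mem_product] at hz
      obtain ⟨⟨hz1, hz2⟩, hlt⟩ := hz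
      obtain ⟨hμS, hμo⟩ := (hmemO z.1).mp hz1
      rw [hmemR] at hz2
      obtain ⟨hsF, hsS, hso⟩ := hz2
      rw [mem_coe, mem_filter, Finset.mem_product]
      refine ⟨⟨?_, ?_⟩, ?_⟩
      · rw [hE0, mem_image]
        exact ⟨z.2, (hmemR z.2).mpr ⟨hsF, hsS, hso⟩, rfl⟩
      · rw [hmemE]
        constructor
        · intro hcon
          have h' := hadd z.2 hsS (z.1 - z.2) hcon
          rw [Nat.add_sub_cancel' (le_of_lt hlt)] at h'
          exact hμS h'
        · obtain ⟨c, hc⟩ : Odd z.2 := by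
            rcases Nat.even_or_odd z.2 with h | h
            · exact absurd h hso
            · exact h
          obtain ⟨d, hd⟩ : Odd z.1 := by
            rcases Nat.even_or_odd z.1 with h | h
            · exact absurd h hμo
            · exact h
          exact ⟨d - c, by simp only; omega⟩
      · have hz1F : z.1 ≤ F := hle_F _ hμS
        simp only
        omega
    · intro z hz w hw hzw
      rw [mem_coe, mem_filter, Finset.mem_product] at hz hw
      obtain ⟨⟨hz1, hz2⟩, hzlt⟩ := hz
      obtain ⟨⟨hw1, hw2⟩, hwlt⟩ := hw
      rw [hmemR] at hz2 hw2
      have hz1F : z.1 ≤ F := hle_F _ ((hmemO z.1).mp hz1).1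
      have hw1F : w.1 ≤ F := hle_F _ ((hmemO w.1).mp hw1).1
      simp only [Prod.mk.injEq] at hzw
      obtain ⟨h1', h2'⟩ := hzw
      have he1 : z.1 = w.1 := by omega
      have he2 : z.2 = w.2 := by omega
      exact Prod.ext he1 he2
  have hE0le : ∀ e1 ∈ E0, #(E.filter (· ≤ e1)) ≤ #(E0.filter (· ≤ e1)) + (E.card - E0.card) := by
    intro e1 _
    have hsub : E.filter (· ≤ e1) ⊆ (E0.filter (· ≤ e1)) ∪ (E \ E0) := by
      intro x hx
      rw [mem_filter] at hx
      rw [mem_union, mem_filter, mem_sdiff]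
      by_cases hx0 : x ∈ E0
      · exact Or.inl ⟨hx0, hx.2⟩
      · exact Or.inr ⟨hx.1, hx0⟩
    calc #(E.filter (· ≤ e1)) ≤ #((E0.filter (· ≤ e1)) ∪ (E \ E0)) := card_le_card hsub
      _ ≤ #(E0.filter (· ≤ e1)) + #(E \ E0) := card_union_le _ _
      _ = #(E0.filter (· ≤ e1)) + (E.card - E0.card) := by rw [card_sdiff_of_subset hE0E]
  have hE0sum : ∑ e1 ∈ E0, #(E0.filter (· ≤ e1)) = E0.card.choose 2 + E0.card := by
    have h1 : ∀ e1 ∈ E0, #(E0.filter (· ≤ e1)) = #(E0.filter (· < e1)) + 1 := by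
      intro e1 he1
      have hins : E0.filter (· ≤ e1) = insert e1 (E0.filter (· < e1)) := by
        ext x
        simp only [mem_filter, mem_insert]
        constructor
        · rintro ⟨hx, hle⟩
          rcases eq_or_lt_of_le hle with h | h
          · exact Or.inl h
          · exact Or.inr ⟨hx, h⟩
        · rintro (rfl | ⟨hx, hlt⟩)
          · exact ⟨he1, le_refl _⟩
          · exact ⟨hx, le_of_lt hlt⟩
      rw [hins, card_insert_of_notMem (by simp)]
    rw [Finset.sum_congr rfl h1, Finset.sum_add_distrib, sum_filter_lt_card,
      Finset.sum_const, smul_eq_mul, mul_one]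
  have hBbound : (∑ μ ∈ O, aO μ)
      ≤ R.card.choose 2 + R.card + R.card * (γ - R.card) := by
    calc (∑ μ ∈ O, aO μ) = #((O ×ˢ R).filter (fun z => z.2 < z.1)) := hBP
      _ ≤ #((E0 ×ˢ E).filter (fun z => z.2 ≤ z.1)) := hBinj
      _ = ∑ e1 ∈ E0, #(E.filter (· ≤ e1)) := hPE
      _ ≤ ∑ e1 ∈ E0, (#(E0.filter (· ≤ e1)) + (E.card - E0.card)) := Finset.sum_le_sum hE0le
      _ = (E0.card.choose 2 + E0.card) + E0.card * (E.card - E0.card) := by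
          rw [Finset.sum_add_distrib, hE0sum, Finset.sum_const, smul_eq_mul]
      _ = R.card.choose 2 + R.card + R.card * (γ - R.card) := by
          rw [hE0card, hEcard]
  -- Frobenius count
  have haFg : a F + g = F := by
    have hpart := Finset.card_filter_add_card_filter_not
      (s := range F) (p := p)
    rw [card_range, hcF] at hpart
    have hF0 : F ≠ 0 := by omega
    have hins : (range F).filter (fun y => ¬ p y)
        = insert 0 ((range F).filter (fun y => y ∈ S ∧ y ≠ 0)) := by
      ext y
      simp only [mem_filter, mem_insert, mem_range, hp, not_not]
      constructor
      · rintro ⟨hy, hys⟩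
        by_cases h' : y = 0
        · exact Or.inl h'
        · exact Or.inr ⟨hy, hys, h'⟩
      · rintro (rfl | ⟨hy, hys, _⟩)
        · exact ⟨Nat.pos_of_ne_zero hF0, h0⟩
        · exact ⟨hy, hys⟩
    rw [hins, card_insert_of_notMem (by simp)] at hpart
    have haF : a F = #((range F).filter (fun y => y ∈ S ∧ y ≠ 0)) := rfl
    omega
  -- final arithmetic
  have hrγ' : R.card ≤ γ := by rw [← hEcard]; exact hrγ
  set n' := g - 2*γ with hn'
  have hoc : O.card = γ + n' := by omega
  set u := γ - R.card with hu
  have hur : R.card + u = γ := by omega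
  have hx : u ≤ u * u := by
    rcases Nat.eq_zero_or_pos u with h | h
    · simp [h]
    · exact Nat.le_mul_of_pos_left _ h
  have e1 := two_mul_choose_two γ
  have e2 := two_mul_choose_two O.card
  have e3 := two_mul_choose_two R.card
  have e4 := two_mul_choose_two n'
  have hstep1 : Kweight S + 2 * R.card = (∑ ℓ ∈ L, a ℓ) + 2 * γ := by omega
  have hstep2 : (∑ ℓ ∈ L, a ℓ) + γ * O.card
      ≤ γ.choose 2 + O.card.choose 2 + 2 * (∑ μ ∈ O, aO μ)
        + (∑ ε ∈ E, #(O.filter (· < ε))) := by omega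
  have hstep3 : 2 * Kweight S + 4 * R.card + 2 * (γ * O.card)
      ≤ 2 * γ.choose 2 + 2 * O.card.choose 2
        + 4 * (R.card.choose 2 + R.card + R.card * u) + 2 * (γ * γ) + 4 * γ := by omega
  have hprod1 : γ * O.card = γ * γ + γ * n' := by rw [hoc]; ring
  have hprod2 : O.card * O.card = γ * γ + 2 * (γ * n') + n' * n' := by rw [hoc]; ring
  have hprod3 : γ * γ = R.card * R.card + 2 * (R.card * u) + u * u := by
    rw [← hur]; ring
  have hprod4 : γ * n' = R.card * n' + u * n' := by rw [← hur]; ring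
  have hgoal2 : 2 * Kweight S ≤ 2 * (n'.choose 2) + 4 * (γ * γ) := by omega
  have hsq : γ ^ 2 = γ * γ := sq γ
  omega
end

section
/- Let γ ≥ 0 be an integer and let S be a γ-hyperelliptic numerical semigroup. Then every even integer m with m ≥ 4γ belongs to S. -/
open Classical in
/-- Counting lemma: if `P` is closed under addition and `¬ P n` (with `n ≥ 1`),
then there are at least `n/2 + 1` failures of `P` in `[1, n]`. -/
lemma aux_lower (P : ℕ → Prop) (hadd : ∀ a b, P a → P b → P (a + b))
    (n : ℕ) (h1 : 1 ≤ n) (hn : ¬ P n) :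
    n / 2 + 1 ≤ ((Finset.Icc 1 n).filter (fun j => ¬ P j)).card := by
  set g : ℕ → ℕ := fun j => if P j then n - j else j with hg
  have hginj : Set.InjOn g ↑(Finset.Icc 1 (n / 2)) := by
    intro a ha b hb hab
    simp only [Finset.coe_Icc, Set.mem_Icc] at ha hb
    simp only [hg] at hab
    by_cases hPa : P a <;> by_cases hPb : P b <;> simp [hPa, hPb] at hab <;> omega
  have himg : (Finset.Icc 1 (n / 2)).image g ⊆
      (Finset.Icc 1 n).filter (fun j => ¬ P j) := by
    intro x hx
    simp only [Finset.mem_image, Finset.mem_Icc] at hx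
    obtain ⟨j, ⟨hj1, hj2⟩, rfl⟩ := hx
    simp only [Finset.mem_filter, Finset.mem_Icc, hg]
    by_cases hPj : P j
    · simp only [hPj, if_true]
      refine ⟨⟨by omega, by omega⟩, fun hc => hn ?_⟩
      have := hadd _ _ hc hPj
      have he : n - j + j = n := by omega
      rwa [he] at this
    · simp [hPj]; omega
  have hnotin : n ∉ (Finset.Icc 1 (n / 2)).image g := by
    intro hc
    simp only [Finset.mem_image, Finset.mem_Icc, hg] at hc
    obtain ⟨j, ⟨hj1, hj2⟩, hje⟩ := hc
    by_cases hPj : P j <;> simp [hPj] at hje <;> omega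
  have hins : insert n ((Finset.Icc 1 (n / 2)).image g) ⊆
      (Finset.Icc 1 n).filter (fun j => ¬ P j) := by
    intro x hx
    rcases Finset.mem_insert.mp hx with rfl | hx
    · simp only [Finset.mem_filter, Finset.mem_Icc]; exact ⟨⟨h1, le_refl _⟩, hn⟩
    · exact himg hx
  calc n / 2 + 1 = (Finset.Icc 1 (n / 2)).card + 1 := by rw [Nat.card_Icc]; omega
    _ = ((Finset.Icc 1 (n / 2)).image g).card + 1 := by
        rw [Finset.card_image_of_injOn hginj]
    _ = (insert n ((Finset.Icc 1 (n / 2)).image g)).card := by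
        rw [Finset.card_insert_of_notMem hnotin]
    _ ≤ _ := Finset.card_le_card hins

theorem even_ge_mem (γ : ℕ) (S : Set ℕ) (hS : IsNumericalSemigroup S)
    (hγ : GammaHyperelliptic γ S) (m : ℕ) (hm : Even m) (hge : 4 * γ ≤ m) :
    m ∈ S := by
  classical
  obtain ⟨hS0, hSadd, hSfin⟩ := hS
  obtain ⟨hγ1, hγ2⟩ := hγ
  -- 4γ+2 ∈ S
  have hinf : {n | n ∈ S ∧ n ≠ 0}.Infinite := by
    have hfin : {n | n ∈ S ∧ n ≠ 0}ᶜ.Finite := by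
      apply Set.Finite.subset (hSfin.union (Set.finite_singleton 0))
      intro x hx
      simp only [Set.mem_compl_iff, Set.mem_setOf_eq, not_and_or, not_not] at hx
      rcases hx with h | h
      · exact Or.inl h
      · exact Or.inr (by simpa using h)
    have := hfin.infinite_compl
    rwa [compl_compl] at this
  have h42 : 4 * γ + 2 ∈ S := by
    have := Nat.nth_mem_of_infinite (p := fun n => n ∈ S ∧ n ≠ 0) hinf γ
    rw [hγ2] at this
    exact this.1
  -- exactly γ elements j of [1, 2γ] with 2j ∈ S
  have hcard : ((Finset.Icc 1 (2 * γ)).filter (fun j => 2 * j ∈ S)).card = γ := by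
    have hset : {n | n ∈ Set.Icc 2 (4 * γ) ∧ Even n ∧ n ∈ S} =
        ↑((Finset.Icc 2 (4 * γ)).filter (fun n => Even n ∧ n ∈ S)) := by
      ext x
      simp [Finset.mem_filter, Set.mem_Icc]
    rw [hset, Set.ncard_coe_finset] at hγ1
    have himg : ((Finset.Icc 1 (2 * γ)).filter (fun j => 2 * j ∈ S)).image (fun j => 2 * j)
        = (Finset.Icc 2 (4 * γ)).filter (fun n => Even n ∧ n ∈ S) := by
      ext a
      simp only [Finset.mem_image, Finset.mem_filter, Finset.mem_Icc]
      constructor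
      · rintro ⟨j, ⟨⟨hj1, hj2⟩, hjS⟩, rfl⟩
        exact ⟨⟨by omega, by omega⟩, ⟨j, by omega⟩, hjS⟩
      · rintro ⟨⟨ha1, ha2⟩, ⟨r, hr⟩, haS⟩
        refine ⟨r, ⟨⟨by omega, by omega⟩, ?_⟩, by omega⟩
        have : 2 * r = a := by omega
        rwa [this]
    rw [← himg, Finset.card_image_of_injective _ (fun a b h => by omega)] at hγ1
    exact hγ1
  have hcard' : ((Finset.Icc 1 (2 * γ)).filter (fun j => ¬ 2 * j ∈ S)).card = γ := by
    have := Finset.card_filter_add_card_filter_not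
      (s := Finset.Icc 1 (2 * γ)) (p := fun j => 2 * j ∈ S)
    rw [hcard, Nat.card_Icc] at this
    omega
  -- additivity of the halved predicate
  have hTadd : ∀ a b, 2 * a ∈ S → 2 * b ∈ S → 2 * (a + b) ∈ S := by
    intro a b ha hb
    have := hSadd _ ha _ hb
    rwa [← Nat.mul_add] at this
  -- main claim: 2n ∈ S for all n ≥ 2γ
  have claim : ∀ n, 2 * γ ≤ n → 2 * n ∈ S := by
    intro n
    induction n using Nat.strong_induction_on with
    | _ n ih =>
      intro hn
      by_cases hn0 : n = 0
      · subst hn0; simpa using hS0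
      by_cases hn1 : n = 2 * γ + 1
      · subst hn1
        have : 2 * (2 * γ + 1) = 4 * γ + 2 := by ring
        rw [this]; exact h42
      by_contra hc
      have hlow := aux_lower (fun j => 2 * j ∈ S) hTadd n (by omega) hc
      beta_reduce at hlow
      by_cases hcase : n = 2 * γ
      · -- gaps in [1, n] are within [1, 2γ], so at most γ of them; but ≥ γ+1
        rw [hcase] at hlow
        rw [hcard'] at hlow
        omega
      · -- n ≥ 2γ + 2
        have hns : 2 * γ + 2 ≤ n := by omega
        have hsub : (Finset.Icc 1 n).filter (fun j => ¬ 2 * j ∈ S) ⊆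
            insert n ((Finset.Icc 1 (2 * γ)).filter (fun j => ¬ 2 * j ∈ S)) := by
          intro x hx
          simp only [Finset.mem_filter, Finset.mem_Icc] at hx
          obtain ⟨⟨hx1, hx2⟩, hxS⟩ := hx
          rcases le_or_gt x (2 * γ) with h | h
          · exact Finset.mem_insert_of_mem (by simp [Finset.mem_filter, Finset.mem_Icc,
              hx1, h, hxS])
          · rcases lt_or_eq_of_le hx2 with h2 | h2
            · exact absurd (ih x h2 (by omega)) hxS
            · exact h2 ▸ Finset.mem_insert_self _ _
        have := Finset.card_le_card hsub
        have hins := Finset.card_insert_le n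
          ((Finset.Icc 1 (2 * γ)).filter (fun j => ¬ 2 * j ∈ S))
        rw [hcard'] at hins
        omega
  obtain ⟨k, rfl⟩ := hm
  have hk : 2 * γ ≤ k := by omega
  have := claim k hk
  rwa [Nat.two_mul] at this
end

section
/- Let γ ≥ 1 be an integer and let S be a γ-hyperelliptic numerical semigroup of genus g ≥ 3γ whose multiplicity (smallest nonzero element) is 4. Then there exists an integer k with 1 ≤ k ≤ γ+1 such that W_K(S) = C(g-2γ, 2) + γ² + γ + k² - 3k + 2. -/
private lemma sum4r (n r : ℕ) : (∑ j ∈ Finset.range n, (4*j+r)) + 2*n = 2*n^2 + r*n := by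
  induction n with
  | zero => simp
  | succ m ih =>
    rw [Finset.sum_range_succ]
    have h : 2*(m+1)^2 + r*(m+1) = (2*m^2 + r*m) + (4*m+r) + 2 := by ring
    omega

private lemma sumId (m : ℕ) : (∑ i ∈ Finset.range m, (i+1)) * 2 = m*(m+1) := by
  induction m with
  | zero => simp
  | succ n ih =>
    rw [Finset.sum_range_succ]
    have h : (n+1)*(n+1+1) = n*(n+1) + (n+1)*2 := by ring
    omega

private lemma choose2 (m : ℕ) : (m.choose 2 : ℤ) * 2 = (m : ℤ) * ((m : ℤ) - 1) := by
  induction m with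
  | zero => simp
  | succ n ih =>
    rw [Nat.choose_succ_succ]
    rw [Nat.choose_one_right] at *
    push_cast at ih ⊢
    linarith [ih]

set_option maxHeartbeats 1000000 in
theorem Kweight_mult_four (γ g : ℕ) (hγ : 1 ≤ γ) (S : Set ℕ)
    (hS : IsNumericalSemigroup S) (hγS : GammaHyperelliptic γ S)
    (hg : genus S = g) (hgen : 3 * γ ≤ g)
    (hmult : sInf {n | n ∈ S ∧ n ≠ 0} = 4) :
    ∃ k : ℕ, 1 ≤ k ∧ k ≤ γ + 1 ∧
      (Kweight S : ℤ) = Nat.choose (g - 2 * γ) 2 + γ ^ 2 + γ + k ^ 2 - 3 * k + 2 := by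
  classical
  obtain ⟨h0, hadd, hfin⟩ := hS
  have hTne : {n | n ∈ S ∧ n ≠ 0}.Nonempty := by
    by_contra h
    rw [Set.not_nonempty_iff_eq_empty] at h
    rw [h, Nat.sInf_empty] at hmult
    exact absurd hmult (by norm_num)
  have h4 : 4 ∈ S := (hmult ▸ Nat.sInf_mem hTne).1
  have hge : ∀ n ∈ S, n ≠ 0 → 4 ≤ n := fun n hn hn0 => hmult ▸ Nat.sInf_le ⟨hn, hn0⟩
  have hmul4 : ∀ k : ℕ, 4 * k ∈ S := by
    intro k; induction k with
    | zero => simpa using h0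
    | succ m ih =>
      have := hadd _ ih _ h4
      have he : 4 * (m + 1) = 4 * m + 4 := by ring
      rwa [he]
  have hres : ∀ r : ℕ, {n | n ∈ S ∧ n % 4 = r % 4}.Nonempty := by
    intro r
    have hinf : {n : ℕ | n % 4 = r % 4}.Infinite := by
      apply Set.infinite_of_injective_forall_mem (f := fun k : ℕ => 4*k + r % 4)
      · intro a b hab
        simp only [] at hab
        omega
      · intro k; simp [Set.mem_setOf_eq]
    obtain ⟨n, hn1, hn2⟩ := (hinf.diff hfin).nonempty
    exact ⟨n, by simpa using hn2, hn1⟩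
  set w1 := sInf {n | n ∈ S ∧ n % 4 = 1 % 4} with hw1def
  set w2 := sInf {n | n ∈ S ∧ n % 4 = 2 % 4} with hw2def
  set w3 := sInf {n | n ∈ S ∧ n % 4 = 3 % 4} with hw3def
  have hw1m : w1 ∈ S ∧ w1 % 4 = 1 := Nat.sInf_mem (hres 1)
  have hw2m : w2 ∈ S ∧ w2 % 4 = 2 := Nat.sInf_mem (hres 2)
  have hw3m : w3 ∈ S ∧ w3 % 4 = 3 := Nat.sInf_mem (hres 3)
  have hw1le : ∀ n ∈ S, n % 4 = 1 → w1 ≤ n := fun n hn h => Nat.sInf_le ⟨hn, h⟩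
  have hw2le : ∀ n ∈ S, n % 4 = 2 → w2 ≤ n := fun n hn h => Nat.sInf_le ⟨hn, h⟩
  have hw3le : ∀ n ∈ S, n % 4 = 3 → w3 ≤ n := fun n hn h => Nat.sInf_le ⟨hn, h⟩
  have hchar : ∀ n, n ∈ S ↔
      (n % 4 = 0 ∨ (n % 4 = 1 ∧ w1 ≤ n) ∨ (n % 4 = 2 ∧ w2 ≤ n) ∨ (n % 4 = 3 ∧ w3 ≤ n)) := by
    intro n
    constructor
    · intro hn
      have h4' : n % 4 = 0 ∨ n % 4 = 1 ∨ n % 4 = 2 ∨ n % 4 = 3 := by omega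
      rcases h4' with h | h | h | h
      · exact Or.inl h
      · exact Or.inr (Or.inl ⟨h, hw1le n hn h⟩)
      · exact Or.inr (Or.inr (Or.inl ⟨h, hw2le n hn h⟩))
      · exact Or.inr (Or.inr (Or.inr ⟨h, hw3le n hn h⟩))
    · rintro (h | ⟨h, hle⟩ | ⟨h, hle⟩ | ⟨h, hle⟩)
      · have : n = 4 * (n / 4) := by omega
        rw [this]; exact hmul4 _
      · have : n = w1 + 4 * ((n - w1) / 4) := by omega
        rw [this]; exact hadd _ hw1m.1 _ (hmul4 _)
      · have : n = w2 + 4 * ((n - w2) / 4) := by omega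
        rw [this]; exact hadd _ hw2m.1 _ (hmul4 _)
      · have : n = w3 + 4 * ((n - w3) / 4) := by omega
        rw [this]; exact hadd _ hw3m.1 _ (hmul4 _)
  -- Step D : γ-hyperelliptic consequences
  have hqinf : {n | n ∈ S ∧ n ≠ 0}.Infinite := by
    apply Set.infinite_of_injective_forall_mem (f := fun k : ℕ => 4*(k+1))
    · intro a b hab
      simp only [] at hab
      omega
    · intro k; exact ⟨hmul4 (k+1), by omega⟩
  have hmem42 : (4*γ+2) ∈ S := by
    have := Nat.nth_mem_of_infinite hqinf γ
    rw [hγS.2] at this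
    exact this.1
  have hcount : Nat.count (fun n => n ∈ S ∧ n ≠ 0) (4*γ+2) = γ := by
    have := Nat.count_nth_of_infinite hqinf γ
    rwa [hγS.2] at this
  rw [Nat.count_eq_card_filter_range] at hcount
  -- w1, w3 > 4γ+2
  have hodd_gt : ∀ w : ℕ, w ∈ S → w % 4 = 1 ∨ w % 4 = 3 → 4*γ+2 < w := by
    intro w hw hwmod
    by_contra hle
    push_neg at hle
    have hwlt : w < 4*γ+2 := by omega
    have hw0 : w ≠ 0 := by omega
    have hsub : insert w ((Finset.range γ).image (fun j => 4*(j+1))) ⊆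
        (Finset.range (4*γ+2)).filter (fun n => n ∈ S ∧ n ≠ 0) := by
      intro x hx
      simp only [Finset.mem_insert, Finset.mem_image, Finset.mem_range] at hx
      rcases hx with rfl | ⟨j, hj, rfl⟩
      · simp only [Finset.mem_filter, Finset.mem_range]
        exact ⟨hwlt, hw, hw0⟩
      · simp only [Finset.mem_filter, Finset.mem_range]
        exact ⟨by omega, hmul4 (j+1), by omega⟩
    have hni : w ∉ (Finset.range γ).image (fun j => 4*(j+1)) := by
      simp only [Finset.mem_image, Finset.mem_range]
      rintro ⟨j, hj, rfl⟩
      omega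
    have hinj : ∀ x ∈ Finset.range γ, ∀ y ∈ Finset.range γ,
        4*(x+1) = 4*(y+1) → x = y := by intro x _ y _ h; omega
    have hcard1 : (insert w ((Finset.range γ).image (fun j => 4*(j+1)))).card = γ + 1 := by
      rw [Finset.card_insert_of_notMem hni, Finset.card_image_of_injOn hinj, Finset.card_range]
    have := Finset.card_le_card hsub
    rw [hcard1, hcount] at this
    omega
  have hw1gt : 4*γ+2 < w1 := hodd_gt w1 hw1m.1 (Or.inl hw1m.2)
  have hw3gt : 4*γ+2 < w3 := hodd_gt w3 hw3m.1 (Or.inr hw3m.2)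
  -- w2 = 4γ+2
  have hw2le42 : w2 ≤ 4*γ+2 := hw2le _ hmem42 (by omega)
  have hw2gt : 4*γ < w2 := by
    by_contra hle
    push_neg at hle
    have hset : {n | n ∈ Set.Icc 2 (4*γ) ∧ Even n ∧ n ∈ S} =
        ↑((Finset.Icc 2 (4*γ)).filter (fun n => Even n ∧ n ∈ S)) := by
      ext x
      simp [Set.mem_Icc]
    have hγ1 := hγS.1
    rw [hset, Set.ncard_coe_finset] at hγ1
    have hw2ne0 : w2 ≠ 0 := by omega
    have hsub : insert w2 ((Finset.range γ).image (fun j => 4*(j+1))) ⊆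
        (Finset.Icc 2 (4*γ)).filter (fun n => Even n ∧ n ∈ S) := by
      intro x hx
      simp only [Finset.mem_insert, Finset.mem_image, Finset.mem_range] at hx
      rcases hx with rfl | ⟨j, hj, rfl⟩
      · simp only [Finset.mem_filter, Finset.mem_Icc]
        refine ⟨⟨by omega, hle⟩, ?_, hw2m.1⟩
        rw [Nat.even_iff]; omega
      · simp only [Finset.mem_filter, Finset.mem_Icc]
        refine ⟨⟨by omega, by omega⟩, ?_, hmul4 (j+1)⟩
        rw [Nat.even_iff]; omega
    have hni : w2 ∉ (Finset.range γ).image (fun j => 4*(j+1)) := by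
      simp only [Finset.mem_image, Finset.mem_range]
      rintro ⟨j, hj, hj2⟩
      have := hw2m.2
      omega
    have hinj : ∀ x ∈ Finset.range γ, ∀ y ∈ Finset.range γ,
        4*(x+1) = 4*(y+1) → x = y := by intro x _ y _ h; omega
    have hcard1 : (insert w2 ((Finset.range γ).image (fun j => 4*(j+1)))).card = γ + 1 := by
      rw [Finset.card_insert_of_notMem hni, Finset.card_image_of_injOn hinj, Finset.card_range]
    have := Finset.card_le_card hsub
    rw [hcard1, hγ1] at this
    omega
  have hw2eq : w2 = 4*γ+2 := by omega
  -- Step E: parameters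
  set n1 := w1 / 4 with hn1def
  set n3 := w3 / 4 with hn3def
  have hw1eq : w1 = 4*n1+1 := by omega
  have hw3eq : w3 = 4*n3+3 := by omega
  have hn1ge : γ + 1 ≤ n1 := by omega
  have hn3ge : γ ≤ n3 := by omega
  have hc1 : w3 ≤ w1 + w2 := hw3le _ (hadd _ hw1m.1 _ hw2m.1) (by omega)
  have hc2 : w1 ≤ w3 + w2 := hw1le _ (hadd _ hw3m.1 _ hw2m.1) (by omega)
  have hd1 : n3 ≤ n1 + γ := by omega
  have hd2 : n1 ≤ n3 + γ + 1 := by omega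
  -- Step F: the gap finset
  set Gf : Finset ℕ := ((Finset.range n1).image (fun j => 4*j+1)) ∪
      (((Finset.range γ).image (fun j => 4*j+2)) ∪ ((Finset.range n3).image (fun j => 4*j+3)))
      with hGfdef
  have hmemGf : ∀ x, x ∈ Gf ↔
      ((x % 4 = 1 ∧ x < w1) ∨ (x % 4 = 2 ∧ x < w2) ∨ (x % 4 = 3 ∧ x < w3)) := by
    intro x
    simp only [hGfdef, Finset.mem_union, Finset.mem_image, Finset.mem_range]
    constructor
    · rintro (⟨j,hj,rfl⟩ | ⟨j,hj,rfl⟩ | ⟨j,hj,rfl⟩) <;> omega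
    · rintro (⟨h1,h2⟩ | ⟨h1,h2⟩ | ⟨h1,h2⟩)
      · exact Or.inl ⟨x/4, by omega, by omega⟩
      · exact Or.inr (Or.inl ⟨x/4, by omega, by omega⟩)
      · exact Or.inr (Or.inr ⟨x/4, by omega, by omega⟩)
  have hcompl : ∀ x, x ∉ S ↔ x ∈ Gf := by
    intro x
    rw [hmemGf, hchar]
    omega
  -- cardinality and sum of Gf
  have hinj1 : ∀ x ∈ Finset.range n1, ∀ y ∈ Finset.range n1, 4*x+1 = 4*y+1 → x = y := by
    intro x _ y _ h; omega
  have hinj2 : ∀ x ∈ Finset.range γ, ∀ y ∈ Finset.range γ, 4*x+2 = 4*y+2 → x = y := by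
    intro x _ y _ h; omega
  have hinj3 : ∀ x ∈ Finset.range n3, ∀ y ∈ Finset.range n3, 4*x+3 = 4*y+3 → x = y := by
    intro x _ y _ h; omega
  have hdisj2 : Disjoint ((Finset.range γ).image (fun j => 4*j+2))
      ((Finset.range n3).image (fun j => 4*j+3)) := by
    simp only [Finset.disjoint_left, Finset.mem_image, Finset.mem_range]
    rintro a ⟨j,hj,rfl⟩ ⟨i,hi,h⟩
    omega
  have hdisj1 : Disjoint ((Finset.range n1).image (fun j => 4*j+1))
      (((Finset.range γ).image (fun j => 4*j+2)) ∪ ((Finset.range n3).image (fun j => 4*j+3))) := by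
    simp only [Finset.disjoint_left, Finset.mem_union, Finset.mem_image, Finset.mem_range]
    rintro a ⟨j,hj,rfl⟩ (⟨i,hi,h⟩ | ⟨i,hi,h⟩) <;> omega
  have hcard : Gf.card = n1 + (γ + n3) := by
    rw [hGfdef, Finset.card_union_of_disjoint hdisj1, Finset.card_union_of_disjoint hdisj2,
      Finset.card_image_of_injOn hinj1, Finset.card_image_of_injOn hinj2,
      Finset.card_image_of_injOn hinj3, Finset.card_range, Finset.card_range, Finset.card_range]
  have hsumGf : (∑ x ∈ Gf, x) + 2*n1 + 2*γ + 2*n3 =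
      2*n1^2 + n1 + 2*γ^2 + 2*γ + 2*n3^2 + 3*n3 := by
    rw [hGfdef, Finset.sum_union hdisj1, Finset.sum_union hdisj2,
      Finset.sum_image hinj1, Finset.sum_image hinj2, Finset.sum_image hinj3]
    have e1 := sum4r n1 1
    have e2 := sum4r γ 2
    have e3 := sum4r n3 3
    omega
  -- genus
  have hceq : Sᶜ = (Gf : Set ℕ) := by
    ext x
    rw [Set.mem_compl_iff, hcompl x, Finset.mem_coe]
  have hgenus : genus S = n1 + (γ + n3) := by
    unfold genus
    rw [hceq, Set.ncard_coe_finset, hcard]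
  have hgv : g = n1 + (γ + n3) := by rw [← hg, hgenus]
  -- nth facts
  have hfinp : {n | n ∉ S}.Finite := hfin
  have hcardp : hfinp.toFinset.card = n1 + (γ + n3) := by
    have htf : hfinp.toFinset = Gf := by
      ext x
      rw [Set.Finite.mem_toFinset, Set.mem_setOf_eq, hcompl x]
    rw [htf, hcard]
  have hgapnotin : ∀ i, i < n1 + (γ + n3) → gap S i ∉ S := by
    intro i hi
    exact Nat.nth_mem_of_lt_card hfinp (by rw [hcardp]; exact hi)
  have hgapmem : ∀ i, i < n1 + (γ + n3) → gap S i ∈ Gf := by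
    intro i hi
    exact (hcompl _).1 (hgapnotin i hi)
  have hlb : ∀ i, i < n1 + (γ + n3) → i + 1 ≤ gap S i := by
    intro i
    induction i with
    | zero =>
      intro h
      have hns : gap S 0 ∉ S := hgapnotin 0 h
      have : gap S 0 ≠ 0 := by
        intro he
        rw [he] at hns
        exact hns h0
      omega
    | succ m ih =>
      intro h
      have h1 : m < n1 + (γ + n3) := by omega
      have hlt : gap S m < gap S (m+1) :=
        Nat.nth_lt_nth_of_lt_card hfinp (Nat.lt_succ_self m) (by rw [hcardp]; exact h)
      have := ih h1
      omega
  have hsumgap : ∑ i ∈ Finset.range (n1 + (γ + n3)), gap S i = ∑ x ∈ Gf, x := by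
    refine Finset.sum_nbij' (fun i => gap S i) (fun x => Nat.count (fun n => n ∉ S) x)
      ?_ ?_ ?_ ?_ ?_
    · intro a ha
      rw [Finset.mem_range] at ha
      exact hgapmem a ha
    · intro x hx
      rw [Finset.mem_range]
      have hpx : x ∉ S := (hcompl x).2 hx
      have := Nat.count_lt_card hfinp hpx
      rwa [hcardp] at this
    · intro a ha
      rw [Finset.mem_range] at ha
      exact Nat.count_nth_of_lt_card_finite hfinp (by rw [hcardp]; exact ha)
    · intro x hx
      exact Nat.nth_count ((hcompl x).2 hx)
    · intro a _
      rfl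
  -- the largest gap
  have hlast : ∀ Lv : ℕ, Lv ∈ Gf → (∀ x ∈ Gf, x ≤ Lv) →
      gap S (n1 + (γ + n3) - 1) = Lv := by
    intro Lv hmem hub
    have hpl : Lv ∉ S := (hcompl _).2 hmem
    have h1 : gap S (n1 + (γ + n3) - 1) ∈ Gf := hgapmem _ (by omega)
    have h2 : gap S (n1 + (γ + n3) - 1) ≤ Lv := hub _ h1
    have h3 : Nat.count (fun n => n ∉ S) Lv ≤ n1 + (γ + n3) - 1 := by
      have := Nat.count_lt_card hfinp hpl
      rw [hcardp] at this
      omega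
    have h4 : Nat.nth (fun n => n ∉ S) (Nat.count (fun n => n ∉ S) Lv) ≤
        Nat.nth (fun n => n ∉ S) (n1 + (γ + n3) - 1) :=
      Nat.nth_le_nth_of_lt_card hfinp h3 (by rw [hcardp]; omega)
    rw [Nat.nth_count hpl] at h4
    exact le_antisymm h2 h4
  -- Kweight in ℤ
  have hK : (Kweight S : ℤ) =
      ((∑ x ∈ Gf, x : ℕ) : ℤ) - (gap S (n1 + (γ + n3) - 1) : ℤ)
        - ((∑ i ∈ Finset.range (n1 + (γ + n3) - 1), (i+1) : ℕ) : ℤ)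
        + (n1 + (γ + n3) : ℤ) - 1 := by
    have hKn : Kweight S =
        (∑ i ∈ Finset.range (n1 + (γ + n3) - 1), (gap S i - (i + 1))) + (n1 + (γ + n3)) - 1 := by
      unfold Kweight
      rw [hgenus]
    have hsplit : ((∑ i ∈ Finset.range (n1 + (γ + n3) - 1), (gap S i - (i + 1)) : ℕ) : ℤ) =
        ((∑ i ∈ Finset.range (n1 + (γ + n3) - 1), gap S i : ℕ) : ℤ)
          - ((∑ i ∈ Finset.range (n1 + (γ + n3) - 1), (i+1) : ℕ) : ℤ) := by
      push_cast
      rw [← Finset.sum_sub_distrib]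
      refine Finset.sum_congr rfl ?_
      intro i hi
      rw [Finset.mem_range] at hi
      have := hlb i (by omega)
      push_cast [Nat.cast_sub this]
      ring
    have hsplit2 : (∑ i ∈ Finset.range (n1 + (γ + n3)), gap S i) =
        (∑ i ∈ Finset.range (n1 + (γ + n3) - 1), gap S i) + gap S (n1 + (γ + n3) - 1) := by
      rw [show n1 + (γ + n3) = (n1 + (γ + n3) - 1) + 1 by omega, Finset.sum_range_succ]
      congr 1 <;> omega
    rw [hsumgap] at hsplit2
    rw [hKn]
    omega
  -- final computation
  have hT := sumId (n1 + (γ + n3) - 1)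
  rw [show n1 + (γ + n3) - 1 + 1 = n1 + (γ + n3) by omega] at hT
  have hch := choose2 (g - 2*γ)
  have hgc : ((g - 2*γ : ℕ) : ℤ) = (n1 : ℤ) + γ + n3 - 2*γ := by omega
  rw [hgc] at hch
  have hsumZ : ((∑ x ∈ Gf, x : ℕ) : ℤ) + 2*n1 + 2*γ + 2*n3 =
      2*(n1:ℤ)^2 + n1 + 2*(γ:ℤ)^2 + 2*γ + 2*(n3:ℤ)^2 + 3*n3 := by
    exact_mod_cast hsumGf
  have hTZ : ((∑ i ∈ Finset.range (n1 + (γ + n3) - 1), (i+1) : ℕ) : ℤ) * 2 =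
      ((n1:ℤ) + γ + n3 - 1) * ((n1:ℤ) + γ + n3) := by
    have h1 : ((∑ i ∈ Finset.range (n1 + (γ + n3) - 1), (i+1) : ℕ) : ℤ) * 2 =
        ((n1 + (γ + n3) - 1 : ℕ) : ℤ) * ((n1 + (γ + n3) : ℕ) : ℤ) := by
      exact_mod_cast hT
    rw [h1, show ((n1 + (γ + n3) - 1 : ℕ) : ℤ) = (n1:ℤ) + γ + n3 - 1 by omega,
      show ((n1 + (γ + n3) : ℕ) : ℤ) = (n1:ℤ) + γ + n3 by push_cast; ring]
  clear_value w1 w2 w3 n1 n3 Gf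
  clear hw1def hw2def hw3def hn1def hn3def hGfdef hchar hcompl hcount hodd_gt hres hmul4 hge
    h4 hTne hmult hγS hqinf hmem42 hinj1 hinj2 hinj3 hdisj1 hdisj2 hcard hsumGf hceq hgenus
    hgapnotin hgapmem hlb hsumgap hT hadd h0 hc1 hc2 hw1le hw2le hw3le hw1m hw2m hw3m
    hw1gt hw3gt hw2le42 hw2gt hgc hcardp hfinp hfin
  rcases lt_or_ge n3 n1 with hcase | hcase
  · -- L = 4*(n1-1)+1, k = n1 - n3
    refine ⟨n1 - n3, by omega, by omega, ?_⟩
    have hLmem : (4*(n1-1)+1) ∈ Gf := by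
      rw [hmemGf]
      exact Or.inl ⟨by omega, by omega⟩
    have hLub : ∀ x ∈ Gf, x ≤ 4*(n1-1)+1 := by
      intro x hx
      rw [hmemGf] at hx
      omega
    have hLG := hlast _ hLmem hLub
    rw [hLG] at hK
    have hLZ : ((4*(n1-1)+1 : ℕ) : ℤ) = 4*(n1:ℤ) - 3 := by omega
    rw [hLZ] at hK
    have hkZ : ((n1 - n3 : ℕ) : ℤ) = (n1:ℤ) - n3 := by omega
    rw [hkZ]
    have h2 : 2 * (Kweight S : ℤ) = 2 * ((Nat.choose (g - 2 * γ) 2 : ℤ) + (γ:ℤ)^2 + γ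
        + ((n1:ℤ) - n3)^2 - 3*((n1:ℤ) - n3) + 2) := by
      rw [hK]
      linear_combination 2*hsumZ - hTZ - hch
    linarith
  · -- L = 4*(n3-1)+3, k = n3 - n1 + 1
    refine ⟨n3 - n1 + 1, by omega, by omega, ?_⟩
    have hLmem : (4*(n3-1)+3) ∈ Gf := by
      rw [hmemGf]
      exact Or.inr (Or.inr ⟨by omega, by omega⟩)
    have hLub : ∀ x ∈ Gf, x ≤ 4*(n3-1)+3 := by
      intro x hx
      rw [hmemGf] at hx
      omega
    have hLG := hlast _ hLmem hLub
    rw [hLG] at hK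
    have hLZ : ((4*(n3-1)+3 : ℕ) : ℤ) = 4*(n3:ℤ) - 1 := by omega
    rw [hLZ] at hK
    have hkZ : ((n3 - n1 + 1 : ℕ) : ℤ) = (n3:ℤ) - n1 + 1 := by omega
    rw [hkZ]
    have h2 : 2 * (Kweight S : ℤ) = 2 * ((Nat.choose (g - 2 * γ) 2 : ℤ) + (γ:ℤ)^2 + γ
        + ((n3:ℤ) - n1 + 1)^2 - 3*((n3:ℤ) - n1 + 1) + 2) := by
      rw [hK]
      linear_combination 2*hsumZ - hTZ - hch
    linarith
end

section
/- Let γ ≥ 1 be an integer and let S be a γ-hyperelliptic numerical semigroup of genus g ≥ 3γ whose multiplicity (smallest nonzero element) is 4 and whose K-weight is not maximal among such semigroups (i.e., W_K(S) < C(g-2γ, 2) + 2γ²). Then C(g-2γ, 2) + γ² + γ ≤ W_K(S) ≤ C(g-2γ, 2) + 2(γ² - γ) + 2. -/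
open Finset in
lemma sum_nth_finset (p : ℕ → Prop) (T : Finset ℕ) (hp : ∀ n, p n ↔ n ∈ T) :
    ∑ i ∈ Finset.range T.card, Nat.nth p i = ∑ n ∈ T, n := by
  classical
  have hpf : (Set.ofPred p).Finite := T.finite_toSet.subset (fun n hn => (hp n).1 hn)
  have hT : hpf.toFinset = T := by ext n; simp [Set.Finite.mem_toFinset, hp n]
  refine Finset.sum_bij' (fun i _ => Nat.nth p i) (fun n _ => Nat.count p n) ?_ ?_ ?_ ?_ ?_
  · intro i hi
    exact (hp _).1 (Nat.nth_mem_of_lt_card hpf (by rw [hT]; exact Finset.mem_range.1 hi))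
  · intro n hn
    have := Nat.count_lt_card hpf ((hp n).2 hn)
    rw [hT] at this
    exact Finset.mem_range.2 this
  · intro i hi
    exact Nat.count_nth_of_lt_card_finite hpf (by rw [hT]; exact Finset.mem_range.1 hi)
  · intro n hn
    exact Nat.nth_count ((hp n).2 hn)
  · intro i _; rfl

lemma nth_last_finset (p : ℕ → Prop) (T : Finset ℕ) (hp : ∀ n, p n ↔ n ∈ T)
    {F : ℕ} (hF : F ∈ T) (hmax : ∀ n ∈ T, n ≤ F) : Nat.nth p (T.card - 1) = F := by
  classical
  have hcount : Nat.count p F = T.card - 1 := by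
    rw [Nat.count_eq_card_filter_range]
    have : (Finset.range F).filter p = T.erase F := by
      ext n
      simp only [Finset.mem_filter, Finset.mem_range, Finset.mem_erase, hp n]
      constructor
      · rintro ⟨h1, h2⟩; exact ⟨by omega, h2⟩
      · rintro ⟨h1, h2⟩; exact ⟨lt_of_le_of_ne (hmax n h2) h1, h2⟩
    rw [this, Finset.card_erase_of_mem hF]
  rw [← hcount, Nat.nth_count ((hp F).2 hF)]

lemma le_nth_of_pos (p : ℕ → Prop) (h0 : ¬ p 0) (hpf : (Set.ofPred p).Finite)
    {i : ℕ} (hi : i < hpf.toFinset.card) : i + 1 ≤ Nat.nth p i := by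
  induction i with
  | zero =>
    have := Nat.nth_mem_of_lt_card hpf hi
    exact Nat.pos_of_ne_zero (fun h => h0 (h ▸ this))
  | succ m ih =>
    have h1 : m + 1 ≤ Nat.nth p m := ih (by omega)
    have h2 : Nat.nth p m < Nat.nth p (m + 1) :=
      Nat.nth_lt_nth_of_lt_card hpf (by omega) hi
    omega

lemma sum_lin_int (c : ℤ) (n : ℕ) :
    (∑ k ∈ Finset.range n, (4 * (k : ℤ) + c)) * 2 = 4 * (n : ℤ) ^ 2 - 4 * n + 2 * c * n := by
  induction n with
  | zero => simp
  | succ m ih => rw [Finset.sum_range_succ, add_mul, ih]; push_cast; ring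

lemma sum_succ_int (n : ℕ) :
    (∑ i ∈ Finset.range n, ((i : ℤ) + 1)) * 2 = (n : ℤ) ^ 2 + n := by
  induction n with
  | zero => simp
  | succ m ih => rw [Finset.sum_range_succ, add_mul, ih]; push_cast; ring

lemma cast_mul_pred (t : ℕ) : ((t * (t - 1) : ℕ) : ℤ) = (t : ℤ) * ((t : ℤ) - 1) := by
  cases t with
  | zero => simp
  | succ s => push_cast [Nat.succ_sub_one]; ring

theorem Kweight_mult_four_nonmaximal (γ g : ℕ) (hγ : 1 ≤ γ) (S : Set ℕ)
    (hS : IsNumericalSemigroup S) (hγS : GammaHyperelliptic γ S)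
    (hg : genus S = g) (hgen : 3 * γ ≤ g)
    (hmult : sInf {n | n ∈ S ∧ n ≠ 0} = 4)
    (hnonmax : Kweight S < Nat.choose (g - 2 * γ) 2 + 2 * γ ^ 2) :
    Nat.choose (g - 2 * γ) 2 + γ ^ 2 + γ ≤ Kweight S ∧
      Kweight S ≤ Nat.choose (g - 2 * γ) 2 + 2 * (γ ^ 2 - γ) + 2 := by
  classical
  obtain ⟨h0S, hadd, hfin⟩ := hS
  have hSinf : S.Infinite := by
    have := hfin.infinite_compl
    rwa [compl_compl] at this
  have hqinf : (Set.ofPred fun n => n ∈ S ∧ n ≠ 0).Infinite := by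
    have hset : (Set.ofPred fun n => n ∈ S ∧ n ≠ 0) = S \ {0} := by
      ext n; simp [Set.mem_diff]
    rw [hset]; exact hSinf.diff (Set.finite_singleton 0)
  have hne : {n | n ∈ S ∧ n ≠ 0}.Nonempty := hqinf.nonempty
  have h4mem : 4 ∈ {n | n ∈ S ∧ n ≠ 0} := hmult ▸ Nat.sInf_mem hne
  have h4S : 4 ∈ S := h4mem.1
  have h4le : ∀ n ∈ S, n ≠ 0 → 4 ≤ n := fun n hn hn0 => hmult ▸ Nat.sInf_le ⟨hn, hn0⟩
  have hstep : ∀ m ∈ S, ∀ k : ℕ, m + 4 * k ∈ S := by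
    intro m hm k
    induction k with
    | zero => simpa using hm
    | succ j ih =>
      have := hadd _ ih _ h4S
      have heq : m + 4 * j + 4 = m + 4 * (j + 1) := by ring
      rwa [heq] at this
  have hmem4 : ∀ n : ℕ, n % 4 = 0 → n ∈ S := by
    intro n hn
    rcases Nat.eq_zero_or_pos n with rfl | hpos
    · exact h0S
    · obtain ⟨k, rfl⟩ : ∃ k, n = 4 + 4 * k := ⟨n / 4 - 1, by omega⟩
      exact hstep 4 h4S k
  have hmemge : ∀ m ∈ S, ∀ n, m ≤ n → n % 4 = m % 4 → n ∈ S := by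
    intro m hm n hle hmod
    obtain ⟨k, rfl⟩ : ∃ k, n = m + 4 * k := ⟨(n - m) / 4, by omega⟩
    exact hstep m hm k
  -- 4γ+2 ∈ S
  have h42 := Nat.nth_mem_of_infinite hqinf γ
  rw [hγS.2] at h42
  have h42S : 4 * γ + 2 ∈ S := h42.1
  have hcount42 : Nat.count (fun n => n ∈ S ∧ n ≠ 0) (4 * γ + 2) = γ := by
    conv_lhs => rw [← hγS.2]
    exact Nat.count_nth_of_infinite hqinf γ
  have hsmall : ∀ n ∈ S, n ≠ 0 → n < 4 * γ + 2 → n % 4 = 0 := by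
    intro n hn hn0 hlt
    by_contra hmod
    have hsub : insert n ((Finset.range γ).image (fun k => 4 * k + 4)) ⊆
        (Finset.range (4 * γ + 2)).filter (fun n => n ∈ S ∧ n ≠ 0) := by
      intro m hm
      simp only [Finset.mem_insert, Finset.mem_image, Finset.mem_range] at hm
      rcases hm with rfl | ⟨k, hk, rfl⟩
      · exact Finset.mem_filter.2 ⟨Finset.mem_range.2 hlt, hn, hn0⟩
      · exact Finset.mem_filter.2 ⟨Finset.mem_range.2 (by omega), hmem4 _ (by omega), by omega⟩
    have h2 : n ∉ (Finset.range γ).image (fun k => 4 * k + 4) := by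
      simp only [Finset.mem_image, Finset.mem_range]
      rintro ⟨k, hk, rfl⟩; omega
    have hcards : γ + 1 ≤ ((Finset.range (4 * γ + 2)).filter (fun n => n ∈ S ∧ n ≠ 0)).card := by
      calc γ + 1 = (insert n ((Finset.range γ).image (fun k => 4 * k + 4))).card := by
            rw [Finset.card_insert_of_notMem h2,
              Finset.card_image_of_injective _ (fun x y h => by omega), Finset.card_range]
        _ ≤ _ := Finset.card_le_card hsub
    rw [← Nat.count_eq_card_filter_range] at hcards
    omega
  -- odd minimal elements
  have hinfr : ∀ r : ℕ, r < 4 → {n | n ∈ S ∧ n % 4 = r}.Nonempty := by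
    intro r hr
    have hinj : Function.Injective (fun k : ℕ => 4 * k + r) := fun x y h => by
      simp only at h; omega
    have h1 : {n : ℕ | n % 4 = r}.Infinite :=
      Set.infinite_of_injective_forall_mem hinj (fun k => by simp; omega)
    have h2 : ({n : ℕ | n % 4 = r} \ Sᶜ).Infinite := h1.diff hfin
    obtain ⟨n, hn1, hn2⟩ := h2.nonempty
    exact ⟨n, by simpa using hn2, hn1⟩
  set a := sInf {n | n ∈ S ∧ n % 4 = 1} with hadef
  have haS : a ∈ S ∧ a % 4 = 1 := Nat.sInf_mem (hinfr 1 (by norm_num))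
  have hamin : ∀ n ∈ S, n % 4 = 1 → a ≤ n := fun n hn hm => Nat.sInf_le ⟨hn, hm⟩
  have hagt : 4 * γ + 2 < a := by
    by_contra h
    push_neg at h
    have := hsmall a haS.1 (by omega) (by omega)
    omega
  obtain ⟨α, hαa, hα⟩ : ∃ α, a = 4 * α + 1 ∧ γ + 1 ≤ α := ⟨a / 4, by omega, by omega⟩
  set b := sInf {n | n ∈ S ∧ n % 4 = 3} with hbdef
  have hbS : b ∈ S ∧ b % 4 = 3 := Nat.sInf_mem (hinfr 3 (by norm_num))
  have hbmin : ∀ n ∈ S, n % 4 = 3 → b ≤ n := fun n hn hm => Nat.sInf_le ⟨hn, hm⟩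
  have hbgt : 4 * γ + 2 < b := by
    by_contra h
    push_neg at h
    have := hsmall b hbS.1 (by omega) (by omega)
    omega
  obtain ⟨β, hβb, hβ⟩ : ∃ β, b = 4 * β + 3 ∧ γ ≤ β := ⟨b / 4, by omega, by omega⟩
  -- the gap finset
  set G : Finset ℕ := ((Finset.range γ).image fun k => 4 * k + 2) ∪
      (((Finset.range α).image fun k => 4 * k + 1) ∪
       ((Finset.range β).image fun k => 4 * k + 3)) with hGdef
  have hGmem : ∀ n, (fun n => n ∉ S) n ↔ n ∈ G := by
    intro n
    simp only [hGdef, Finset.mem_union, Finset.mem_image, Finset.mem_range]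
    constructor
    · intro hn
      have h0 : n % 4 ≠ 0 := fun h => hn (hmem4 n h)
      rcases (show n % 4 = 1 ∨ n % 4 = 2 ∨ n % 4 = 3 by omega) with h | h | h
      · have hna : n < a := by
          by_contra hc
          exact hn (hmemge a haS.1 n (by omega) (by omega))
        exact Or.inr (Or.inl ⟨n / 4, by omega, by omega⟩)
      · have hn42 : n < 4 * γ + 2 := by
          by_contra hc
          exact hn (hmemge (4 * γ + 2) h42S n (by omega) (by omega))
        exact Or.inl ⟨n / 4, by omega, by omega⟩
      · have hnb : n < b := by
          by_contra hc
          exact hn (hmemge b hbS.1 n (by omega) (by omega))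
        exact Or.inr (Or.inr ⟨n / 4, by omega, by omega⟩)
    · rintro (⟨k, hk, rfl⟩ | ⟨k, hk, rfl⟩ | ⟨k, hk, rfl⟩) hmem
      · have := hsmall _ hmem (by omega) (by omega); omega
      · have := hamin _ hmem (by omega); omega
      · have := hbmin _ hmem (by omega); omega
  have hGcard : G.card = γ + (α + β) := by
    rw [hGdef, Finset.card_union_of_disjoint, Finset.card_union_of_disjoint]
    · rw [Finset.card_image_of_injective _ (fun x y h => by omega),
        Finset.card_image_of_injective _ (fun x y h => by omega),
        Finset.card_image_of_injective _ (fun x y h => by omega),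
        Finset.card_range, Finset.card_range, Finset.card_range]
    · rw [Finset.disjoint_left]
      rintro x hx1 hx2
      simp only [Finset.mem_image, Finset.mem_range] at hx1 hx2
      obtain ⟨k, _, rfl⟩ := hx1
      obtain ⟨j, _, hj⟩ := hx2
      omega
    · rw [Finset.disjoint_left]
      rintro x hx1 hx2
      simp only [Finset.mem_image, Finset.mem_range, Finset.mem_union] at hx1 hx2
      obtain ⟨k, _, rfl⟩ := hx1
      rcases hx2 with ⟨j, _, hj⟩ | ⟨j, _, hj⟩ <;> omega
  have hSc : Sᶜ = ↑G := Set.ext fun n => hGmem n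
  have hgval : g = γ + (α + β) := by
    rw [← hg]
    unfold genus
    rw [hSc, Set.ncard_coe_finset, hGcard]
  have hgG : G.card = g := by rw [hGcard, hgval]
  -- sums and last gap
  have hsum : ∑ i ∈ Finset.range G.card, Nat.nth (fun n => n ∉ S) i = ∑ n ∈ G, n :=
    sum_nth_finset _ G hGmem
  set F : ℕ := if α ≤ β then 4 * β - 1 else 4 * α - 3 with hFdef
  have hFG : F ∈ G := by
    rw [hGdef]
    simp only [Finset.mem_union, Finset.mem_image, Finset.mem_range]
    rw [hFdef]
    split_ifs with h
    · exact Or.inr (Or.inr ⟨β - 1, by omega, by omega⟩)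
    · exact Or.inr (Or.inl ⟨α - 1, by omega, by omega⟩)
  have hFmax : ∀ n ∈ G, n ≤ F := by
    intro n hn
    rw [hGdef] at hn
    simp only [Finset.mem_union, Finset.mem_image, Finset.mem_range] at hn
    rw [hFdef]
    split_ifs with h <;> rcases hn with ⟨k, hk, rfl⟩ | ⟨k, hk, rfl⟩ | ⟨k, hk, rfl⟩ <;> omega
  have hlast : Nat.nth (fun n => n ∉ S) (G.card - 1) = F := nth_last_finset _ G hGmem hFG hFmax
  have hpf : (Set.ofPred fun n => n ∉ S).Finite := hfin
  have hpfT : hpf.toFinset = G := by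
    ext n; simp only [Set.Finite.mem_toFinset, Set.mem_setOf_eq]; exact hGmem n
  have hglow : ∀ i < g, i + 1 ≤ Nat.nth (fun n => n ∉ S) i := by
    intro i hi
    refine le_nth_of_pos _ (by simp [h0S]) hpf ?_
    rw [hpfT, hgG]; exact hi
  -- Kweight formula
  have hKW : Kweight S = (∑ i ∈ Finset.range (g - 1), (Nat.nth (fun n => n ∉ S) i - (i + 1))) + g - 1 := by
    simp only [Kweight, gap, hg]
  have hgpos : 4 ≤ g := by omega
  -- cast computations
  set X : ℕ := ∑ i ∈ Finset.range (g - 1), (Nat.nth (fun n => n ∉ S) i - (i + 1)) with hXdef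
  have hXcast : (X : ℤ) = ∑ i ∈ Finset.range (g - 1),
      ((Nat.nth (fun n => n ∉ S) i : ℤ) - ((i : ℤ) + 1)) := by
    rw [hXdef, Nat.cast_sum]
    refine Finset.sum_congr rfl fun i hi => ?_
    have hi' : i < g - 1 := Finset.mem_range.1 hi
    have := hglow i (by omega)
    push_cast [Nat.cast_sub this]
    ring
  have hlast' : Nat.nth (fun n => n ∉ S) (g - 1) = F := by
    rw [show g - 1 = G.card - 1 by omega]; exact hlast
  have hsplit : ∑ i ∈ Finset.range g, (Nat.nth (fun n => n ∉ S) i : ℤ) =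
      (∑ i ∈ Finset.range (g - 1), (Nat.nth (fun n => n ∉ S) i : ℤ)) + F := by
    have hg1 : g = (g - 1) + 1 := by omega
    conv_lhs => rw [hg1]
    rw [Finset.sum_range_succ, hlast']
  have hsumZ : ∑ i ∈ Finset.range g, (Nat.nth (fun n => n ∉ S) i : ℤ) = ∑ n ∈ G, (n : ℤ) := by
    have h := congrArg (Nat.cast (R := ℤ)) hsum
    push_cast at h
    rw [← hgG]
    exact h
  have hSG2 : (∑ n ∈ G, (n : ℤ)) * 2 =
      4 * (γ : ℤ) ^ 2 + (4 * (α : ℤ) ^ 2 - 2 * α) + (4 * (β : ℤ) ^ 2 + 2 * β) := by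
    have hd1 : Disjoint ((Finset.range α).image fun k => 4 * k + 1)
        ((Finset.range β).image fun k => 4 * k + 3) := by
      rw [Finset.disjoint_left]
      rintro x hx1 hx2
      simp only [Finset.mem_image, Finset.mem_range] at hx1 hx2
      obtain ⟨k, _, rfl⟩ := hx1
      obtain ⟨j, _, hj⟩ := hx2
      omega
    have hd2 : Disjoint ((Finset.range γ).image fun k => 4 * k + 2)
        (((Finset.range α).image fun k => 4 * k + 1) ∪
         ((Finset.range β).image fun k => 4 * k + 3)) := by
      rw [Finset.disjoint_left]
      rintro x hx1 hx2
      simp only [Finset.mem_image, Finset.mem_range, Finset.mem_union] at hx1 hx2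
      obtain ⟨k, _, rfl⟩ := hx1
      rcases hx2 with ⟨j, _, hj⟩ | ⟨j, _, hj⟩ <;> omega
    rw [hGdef, Finset.sum_union hd2, Finset.sum_union hd1,
      Finset.sum_image (fun x _ y _ h => by omega),
      Finset.sum_image (fun x _ y _ h => by omega),
      Finset.sum_image (fun x _ y _ h => by omega)]
    push_cast
    rw [add_mul, add_mul]
    rw [show (∑ k ∈ Finset.range γ, (4 * (k : ℤ) + 2)) * 2
          = 4 * (γ : ℤ) ^ 2 - 4 * γ + 2 * 2 * γ from sum_lin_int 2 γ,
      show (∑ k ∈ Finset.range α, (4 * (k : ℤ) + 1)) * 2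
          = 4 * (α : ℤ) ^ 2 - 4 * α + 2 * 1 * α from sum_lin_int 1 α,
      show (∑ k ∈ Finset.range β, (4 * (k : ℤ) + 3)) * 2
          = 4 * (β : ℤ) ^ 2 - 4 * β + 2 * 3 * β from sum_lin_int 3 β]
    ring
  have hgm1 : ((g - 1 : ℕ) : ℤ) = (g : ℤ) - 1 := by omega
  have hX2 : (X : ℤ) * 2 = (∑ n ∈ G, (n : ℤ)) * 2 - 2 * F
      - (((g : ℤ) - 1) ^ 2 + ((g : ℤ) - 1)) := by
    rw [hXcast, Finset.sum_sub_distrib, sub_mul]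
    rw [show (∑ i ∈ Finset.range (g - 1), (Nat.nth (fun n => n ∉ S) i : ℤ))
          = (∑ n ∈ G, (n : ℤ)) - F by rw [← hsumZ, hsplit]; ring]
    rw [sub_mul, sum_succ_int (g - 1), hgm1]
    ring
  rw [hSG2] at hX2
  have h1 : (Kweight S : ℤ) * 2 = 2 * X + 2 * g - 2 := by
    have hKn : Kweight S = X + (g - 1) := by rw [hKW]; omega
    rw [hKn]
    push_cast [hgm1]
    ring
  have hgcast : (g : ℤ) = (γ : ℤ) + α + β := by omega
  rw [hgcast] at hX2
  set n0 : ℕ := g - 2 * γ with hn0def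
  have hn0cast : (n0 : ℤ) = (α : ℤ) + β - γ := by omega
  have hn0pos : 1 ≤ n0 := by omega
  have hc2 : (Nat.choose n0 2 : ℤ) * 2 = ((α : ℤ) + β - γ) * ((α : ℤ) + β - γ - 1) := by
    have h2 : n0.choose 2 * 2 = n0 * (n0 - 1) := by
      rw [Nat.choose_two_right]
      rcases n0 with _ | s
      · simp
      · rw [Nat.succ_sub_one]
        have hev : Even ((s + 1) * s) := by
          simpa [Nat.mul_comm] using Nat.even_mul_succ_self s
        exact Nat.div_mul_cancel hev.two_dvd
    have h3 := congrArg (Nat.cast (R := ℤ)) h2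
    push_cast [Nat.cast_sub hn0pos] at h3
    rw [hn0cast] at h3
    linarith
  set t : ℕ := if α ≤ β then β - α else α - β - 1 with htdef
  have key : Kweight S = Nat.choose n0 2 + (γ ^ 2 + γ + t * (t - 1)) := by
    have hZ : (Kweight S : ℤ) * 2
        = ((Nat.choose n0 2 + (γ ^ 2 + γ + t * (t - 1)) : ℕ) : ℤ) * 2 := by
      rw [Nat.cast_add, Nat.cast_add, Nat.cast_add, Nat.cast_pow, cast_mul_pred]
      rcases le_or_gt α β with hab | hab
      · have htv : (t : ℤ) = (β : ℤ) - α := by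
          rw [htdef, if_pos hab]
          omega
        have hFv : (F : ℤ) = 4 * (β : ℤ) - 1 := by
          rw [hFdef, if_pos hab]
          omega
        rw [htv]
        rw [hFv] at hX2
        rw [hgcast] at h1
        linear_combination h1 + hX2 - hc2
      · have hab' : β + 1 ≤ α := hab
        have htv : (t : ℤ) = (α : ℤ) - β - 1 := by
          rw [htdef, if_neg (by omega)]
          omega
        have hFv : (F : ℤ) = 4 * (α : ℤ) - 3 := by
          rw [hFdef, if_neg (by omega)]
          omega
        rw [htv]
        rw [hFv] at hX2
        rw [hgcast] at h1
        linear_combination h1 + hX2 - hc2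
    have hZ' : Kweight S * 2 = (Nat.choose n0 2 + (γ ^ 2 + γ + t * (t - 1))) * 2 := by
      exact_mod_cast hZ
    omega
  obtain ⟨d, rfl⟩ : ∃ d, γ = d + 1 := ⟨γ - 1, by omega⟩
  constructor
  · rw [key]; omega
  · rw [key] at hnonmax ⊢
    have ht1 : t * (t - 1) + (d + 1) < (d + 1) ^ 2 := by omega
    have ht : t ≤ d := by
      by_contra hc
      push_neg at hc
      have h5 : (d + 1) * d ≤ t * (t - 1) := Nat.mul_le_mul hc (by omega)
      have h6 : (d + 1) ^ 2 = (d + 1) * d + (d + 1) := by ring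
      omega
    have h7 : t * (t - 1) ≤ d * (d - 1) := Nat.mul_le_mul ht (by omega)
    have h8 : (d + 1) ^ 2 + (d + 1) + d * (d - 1) ≤ 2 * ((d + 1) ^ 2 - (d + 1)) + 2 := by
      rcases d with _ | e
      · simp
      · have e1 : (e + 1 + 1) ^ 2 = e * e + 4 * e + 4 := by ring
        have e2 : (e + 1) * (e + 1 - 1) = e * e + e := by
          simp only [Nat.add_sub_cancel]; ring
        rw [e1, e2]
        omega
    omega
end

section
/- Let γ ≥ 1 be an integer, let g ≥ 3γ, and let k be an integer with 1 ≤ k ≤ γ+1. Let S₀ be the numerical semigroup generated by {4, 4γ+2, 2g-2γ-2k+3, 2g-2γ+2k+1}. Then S₀ equals the union of 2·⟨2, 2γ+1⟩ (the set of all elements of the numerical semigroup generated by {2, 2γ+1}, each multiplied by 2) together with {2g-2γ-2k+3, 2g-2γ-2k+7, ..., 2g-2γ+2k-1} ∪ {n ∈ ℕ : n ≥ 2g-2γ+2k+1}, and in particular the largest gap of S₀ is ℓ_g = 2g-2γ+2k-3. -/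
lemma add_four_mem (M : AddSubmonoid ℕ) (h4 : (4:ℕ) ∈ M) {c n : ℕ} (hc : c ∈ M)
    (hle : c ≤ n) (hmod : (n - c) % 4 = 0) : n ∈ M := by
  have h : n = c + (n - c) / 4 * 4 := by omega
  rw [h]
  refine M.add_mem hc ?_
  simpa [smul_eq_mul] using M.nsmul_mem h4 ((n - c) / 4)

lemma closure_pairE (γ : ℕ) :
    (AddSubmonoid.closure ({4, 4 * γ + 2} : Set ℕ) : Set ℕ) =
      {n | n % 4 = 0 ∨ (n % 4 = 2 ∧ 4 * γ + 2 ≤ n)} := by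
  ext n
  simp only [SetLike.mem_coe, Set.mem_setOf_eq]
  constructor
  · intro hn
    induction hn using AddSubmonoid.closure_induction with
    | mem x hx =>
        simp only [Set.mem_insert_iff, Set.mem_singleton_iff] at hx
        rcases hx with rfl | rfl <;> omega
    | zero => omega
    | add x y hx hy ihx ihy => omega
  · intro hn
    have h4 : (4:ℕ) ∈ AddSubmonoid.closure ({4, 4 * γ + 2} : Set ℕ) :=
      AddSubmonoid.subset_closure (by simp)
    have hγ2 : (4 * γ + 2 : ℕ) ∈ AddSubmonoid.closure ({4, 4 * γ + 2} : Set ℕ) :=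
      AddSubmonoid.subset_closure (by simp)
    rcases hn with h | ⟨h1, h2⟩
    · exact add_four_mem _ h4 (AddSubmonoid.zero_mem _) (by omega) (by omega)
    · exact add_four_mem _ h4 hγ2 h2 (by omega)

lemma closure_four (γ k a b : ℕ) (ha2 : a % 2 = 1) (hb : b = a + 4 * k - 2)
    (hk : 1 ≤ k) (hkγ : k ≤ γ + 1) (ha : 2 * γ + 1 ≤ a) (hbγ : 4 * γ + 3 ≤ b) :
    (AddSubmonoid.closure ({4, 4 * γ + 2, a, b} : Set ℕ) : Set ℕ) =
      {n | n % 4 = 0 ∨ (n % 4 = 2 ∧ 4 * γ + 2 ≤ n) ∨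
           (n % 2 = 1 ∧ a ≤ n ∧ (n - a) % 4 = 0 ∧ n < b) ∨ b ≤ n} := by
  ext n
  simp only [SetLike.mem_coe, Set.mem_setOf_eq]
  constructor
  · intro hn
    induction hn using AddSubmonoid.closure_induction with
    | mem x hx =>
        simp only [Set.mem_insert_iff, Set.mem_singleton_iff] at hx
        rcases hx with rfl | rfl | rfl | rfl <;> omega
    | zero => omega
    | add x y hx hy ihx ihy => omega
  · intro hn
    have h4 : (4:ℕ) ∈ AddSubmonoid.closure ({4, 4 * γ + 2, a, b} : Set ℕ) :=
      AddSubmonoid.subset_closure (by simp)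
    have hγ2 : (4 * γ + 2 : ℕ) ∈ AddSubmonoid.closure ({4, 4 * γ + 2, a, b} : Set ℕ) :=
      AddSubmonoid.subset_closure (by simp)
    have hamem : a ∈ AddSubmonoid.closure ({4, 4 * γ + 2, a, b} : Set ℕ) :=
      AddSubmonoid.subset_closure (by simp)
    have hbmem : b ∈ AddSubmonoid.closure ({4, 4 * γ + 2, a, b} : Set ℕ) :=
      AddSubmonoid.subset_closure (by simp)
    rcases hn with h | ⟨h1, h2⟩ | ⟨h1, h2, h3, h4'⟩ | h
    · exact add_four_mem _ h4 (AddSubmonoid.zero_mem _) (by omega) (by omega)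
    · exact add_four_mem _ h4 hγ2 h2 (by omega)
    · exact add_four_mem _ h4 hamem h2 h3
    · have : n % 4 = 0 ∨ (n % 4 = 2 ∧ 4 * γ + 2 ≤ n) ∨ (b ≤ n ∧ (n - b) % 4 = 0)
          ∨ (a ≤ n ∧ (n - a) % 4 = 0) := by omega
      rcases this with h' | ⟨h1', h2'⟩ | ⟨h1', h2'⟩ | ⟨h1', h2'⟩
      · exact add_four_mem _ h4 (AddSubmonoid.zero_mem _) (by omega) (by omega)
      · exact add_four_mem _ h4 hγ2 h2' (by omega)
      · exact add_four_mem _ h4 hbmem h1' h2'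
      · exact add_four_mem _ h4 hamem h1' h2'

lemma double_image (γ : ℕ) :
    ((fun x : ℕ => 2 * x) '' (AddSubmonoid.closure ({2, 2 * γ + 1} : Set ℕ) : Set ℕ)) =
      {n | n % 4 = 0 ∨ (n % 4 = 2 ∧ 4 * γ + 2 ≤ n)} := by
  have h := AddMonoidHom.map_mclosure (AddMonoidHom.mulLeft (2:ℕ)) ({2, 2 * γ + 1} : Set ℕ)
  have h2 : ((AddSubmonoid.closure ({2, 2 * γ + 1} : Set ℕ)).map (AddMonoidHom.mulLeft (2:ℕ)) : Set ℕ)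
      = (fun x : ℕ => 2 * x) '' (AddSubmonoid.closure ({2, 2 * γ + 1} : Set ℕ) : Set ℕ) := by
    simp [AddSubmonoid.coe_map, AddMonoidHom.mulLeft]
  rw [← h2, h, ← closure_pairE γ]
  rw [Set.image_pair]
  norm_num [AddMonoidHom.mulLeft]
  ring_nf

theorem closure_description (γ g k : ℕ) (hγ : 1 ≤ γ) (hg : 3 * γ ≤ g)
    (hk1 : 1 ≤ k) (hk2 : k ≤ γ + 1) (S₀ : Set ℕ)
    (hS₀ : S₀ = (AddSubmonoid.closure
      ({4, 4 * γ + 2, 2 * g - 2 * γ - 2 * k + 3, 2 * g - 2 * γ + 2 * k + 1} : Set ℕ) :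
      Set ℕ)) :
    S₀ = ((fun x => 2 * x) '' (AddSubmonoid.closure ({2, 2 * γ + 1} : Set ℕ) : Set ℕ)) ∪
        {n : ℕ | ∃ j < k, n = 2 * g - 2 * γ - 2 * k + 3 + 4 * j} ∪
        {n : ℕ | 2 * g - 2 * γ + 2 * k + 1 ≤ n} ∧
      sSup {n | n ∉ S₀} = 2 * g - 2 * γ + 2 * k - 3 := by
  set a := 2 * g - 2 * γ - 2 * k + 3 with hadef
  set b := 2 * g - 2 * γ + 2 * k + 1 with hbdef
  have ha2 : a % 2 = 1 := by omega
  have hb : b = a + 4 * k - 2 := by omega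
  have ha : 2 * γ + 1 ≤ a := by omega
  have hbγ : 4 * γ + 3 ≤ b := by omega
  have hclo : S₀ = {n | n % 4 = 0 ∨ (n % 4 = 2 ∧ 4 * γ + 2 ≤ n) ∨
      (n % 2 = 1 ∧ a ≤ n ∧ (n - a) % 4 = 0 ∧ n < b) ∨ b ≤ n} :=
    hS₀.trans (closure_four γ k a b ha2 hb hk1 hk2 ha hbγ)
  constructor
  · rw [hclo, double_image γ]
    ext n
    simp only [Set.mem_union, Set.mem_setOf_eq]
    constructor
    · rintro (h | h | ⟨h1, h2, h3, h4⟩ | h)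
      · exact Or.inl (Or.inl (Or.inl h))
      · exact Or.inl (Or.inl (Or.inr h))
      · exact Or.inl (Or.inr ⟨(n - a) / 4, by omega, by omega⟩)
      · exact Or.inr h
    · rintro ((h | ⟨j, hj, rfl⟩) | h)
      · tauto
      · right; right; left; omega
      · tauto
  · have hval : 2 * g - 2 * γ + 2 * k - 3 = b - 4 := by omega
    rw [hval]
    apply IsGreatest.csSup_eq
    constructor
    · simp only [Set.mem_setOf_eq, hclo]
      omega
    · intro x hx
      simp only [Set.mem_setOf_eq, hclo] at hx
      omega
end

section
/- Let γ ≥ 0 be an integer, let g ≥ 2γ+1, and let S be a nonsymmetric γ-hyperelliptic numerical semigroup of genus g. Let S₀ be the numerical semigroup generated by {4, 4γ+2, 2g-4γ+1}, and let u_1(S) > u_2(S) > ... > u_γ(S) and u_1(S₀) > u_2(S₀) > ... > u_γ(S₀) denote the odd elements less than 2g of S and of S₀, respectively (there are exactly γ of each). Then u_i(S) - u_i(S₀) ≥ 2 for every i with 1 ≤ i ≤ k(S), where k(S) is the number of odd elements of S greater than or equal to the conductor of S. -/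
/-- The semigroupConductor of `S`: the smallest `c` such that every `n ≥ c` lies in `S`. -/
noncomputable def semigroupConductor (S : Set ℕ) : ℕ := sInf {c | ∀ n, c ≤ n → n ∈ S}

theorem odd_elements_gap_two (γ g : ℕ) (hg : 2 * γ + 1 ≤ g) (S S₀ : Set ℕ)
    (hS : IsNumericalSemigroup S) (hγS : GammaHyperelliptic γ S) (hgS : genus S = g)
    (hnonsym : sSup {n | n ∉ S} ≠ 2 * g - 1)
    (hS₀ : S₀ = (AddSubmonoid.closure ({4, 4 * γ + 2, 2 * g - 4 * γ + 1} : Set ℕ) : Set ℕ))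
    (u u₀ : ℕ → ℕ)
    -- `u 1 > u 2 > ... > u γ` enumerates the odd elements of `S` less than `2g`
    (hu_anti : ∀ i j, 1 ≤ i → i < j → j ≤ γ → u j < u i)
    (hu_mem : ∀ i, 1 ≤ i → i ≤ γ → Odd (u i) ∧ u i ∈ S ∧ u i < 2 * g)
    (hu_surj : ∀ n, Odd n → n ∈ S → n < 2 * g → ∃ i, 1 ≤ i ∧ i ≤ γ ∧ u i = n)
    -- `u₀ 1 > u₀ 2 > ... > u₀ γ` enumerates the odd elements of `S₀` less than `2g`
    (hu₀_anti : ∀ i j, 1 ≤ i → i < j → j ≤ γ → u₀ j < u₀ i)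
    (hu₀_mem : ∀ i, 1 ≤ i → i ≤ γ → Odd (u₀ i) ∧ u₀ i ∈ S₀ ∧ u₀ i < 2 * g)
    (hu₀_surj : ∀ n, Odd n → n ∈ S₀ → n < 2 * g → ∃ i, 1 ≤ i ∧ i ≤ γ ∧ u₀ i = n) :
    ∀ i, 1 ≤ i →
      i ≤ {n | Odd n ∧ n ∈ S ∧ semigroupConductor S ≤ n ∧ n < 2 * g}.ncard →
      u₀ i + 2 ≤ u i := by
  classical
  intro i hi1 hik
  set c := semigroupConductor S with hcdef
  set K : Set ℕ := {n | Odd n ∧ n ∈ S ∧ c ≤ n ∧ n < 2 * g} with hKdef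
  have hcon : ∀ n, c ≤ n → n ∈ S := by
    have hne : {m : ℕ | ∀ n, m ≤ n → n ∈ S}.Nonempty := by
      obtain ⟨B, hB⟩ := hS.2.2.bddAbove
      refine ⟨B + 1, fun n hn => ?_⟩
      by_contra h
      have := hB (Set.mem_compl h)
      omega
    exact Nat.sInf_mem hne
  -- i ≤ γ
  have hKsub : K ⊆ ↑((Finset.Icc 1 γ).image u) := by
    intro n hn
    obtain ⟨hodd, hmem, hcn, hlt⟩ := hn
    obtain ⟨j, hj1, hj2, hj3⟩ := hu_surj n hodd hmem hlt
    simp only [Finset.coe_image, Set.mem_image, Finset.mem_coe, Finset.mem_Icc]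
    exact ⟨j, ⟨hj1, hj2⟩, hj3⟩
  have hkγ : K.ncard ≤ γ := by
    calc K.ncard ≤ (((Finset.Icc 1 γ).image u : Finset ℕ) : Set ℕ).ncard :=
          Set.ncard_le_ncard hKsub (Finset.finite_toSet _)
      _ = ((Finset.Icc 1 γ).image u).card := Set.ncard_coe_finset _
      _ ≤ (Finset.Icc 1 γ).card := Finset.card_image_le
      _ = γ := by simp
  have hiγ : i ≤ γ := le_trans hik hkγ
  -- step 1 : the conductor is at most 2g+1-2i
  have hstep1 : c ≤ 2 * g + 1 - 2 * i := by
    by_contra hcon2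
    push_neg at hcon2
    have hsub : K ⊆ ↑((Finset.Icc 1 (i - 1)).image (fun t => 2 * g + 1 - 2 * t)) := by
      intro n hn
      obtain ⟨hodd, hmem, hcn, hlt⟩ := hn
      have hodd' : n % 2 = 1 := Nat.odd_iff.mp hodd
      simp only [Finset.coe_image, Set.mem_image, Finset.mem_coe, Finset.mem_Icc]
      refine ⟨(2 * g + 1 - n) / 2, ⟨?_, ?_⟩, ?_⟩ <;> omega
    have hle : K.ncard ≤ i - 1 := by
      calc K.ncard ≤ ((((Finset.Icc 1 (i - 1)).image fun t => 2 * g + 1 - 2 * t) :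
              Finset ℕ) : Set ℕ).ncard :=
            Set.ncard_le_ncard hsub (Finset.finite_toSet _)
        _ = ((Finset.Icc 1 (i - 1)).image fun t => 2 * g + 1 - 2 * t).card :=
            Set.ncard_coe_finset _
        _ ≤ (Finset.Icc 1 (i - 1)).card := Finset.card_image_le
        _ = i - 1 := by simp
    omega
  -- step 2 : u i ≥ 2g+1-2i
  have hstep2 : 2 * g + 1 ≤ u i + 2 * i := by
    by_contra hlt
    push_neg at hlt
    have hm : ∀ t, 1 ≤ t → t ≤ i → ∃ j, 1 ≤ j ∧ j ≤ γ ∧ u j = 2 * g + 1 - 2 * t := by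
      intro t ht1 ht2
      have hmemS : (2 * g + 1 - 2 * t) ∈ S := hcon _ (by omega)
      have hoddm : Odd (2 * g + 1 - 2 * t) := by
        rw [Nat.odd_iff]; omega
      exact hu_surj _ hoddm hmemS (by omega)
    set f : ℕ → ℕ := fun t => if h : 1 ≤ t ∧ t ≤ i then (hm t h.1 h.2).choose else 0
      with hfdef
    have hf : ∀ t, 1 ≤ t → t ≤ i → 1 ≤ f t ∧ f t ≤ γ ∧ u (f t) = 2 * g + 1 - 2 * t := by
      intro t ht1 ht2
      simp only [hfdef, dif_pos (⟨ht1, ht2⟩ : 1 ≤ t ∧ t ≤ i)]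
      exact (hm t ht1 ht2).choose_spec
    have hmaps : ∀ t ∈ Finset.Icc 1 i, f t ∈ Finset.Icc 1 (i - 1) := by
      intro t ht
      rw [Finset.mem_Icc] at ht ⊢
      obtain ⟨h1, h2, h3⟩ := hf t ht.1 ht.2
      have hgt : u i < u (f t) := by omega
      have hfi : f t < i := by
        by_contra hge
        push_neg at hge
        rcases eq_or_lt_of_le hge with heq | hlt2
        · rw [← heq] at hgt; omega
        · have := hu_anti i (f t) hi1 hlt2 h2
          omega
      omega
    have hinj : Set.InjOn f (Finset.Icc 1 i) := by
      intro a ha b hb hab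
      rw [Finset.coe_Icc, Set.mem_Icc] at ha hb
      obtain ⟨-, -, h3a⟩ := hf a ha.1 ha.2
      obtain ⟨-, -, h3b⟩ := hf b hb.1 hb.2
      rw [hab] at h3a
      omega
    have hcard := Finset.card_le_card_of_injOn f hmaps hinj
    simp only [Nat.card_Icc] at hcard
    omega
  -- the S₀ side
  have hTmem : ∀ j, j < γ → (2 * g - 4 * γ + 1 + 4 * j) ∈ S₀ := by
    intro j hj
    rw [hS₀]
    rw [SetLike.mem_coe]
    have h1 : (2 * g - 4 * γ + 1 : ℕ) ∈
        AddSubmonoid.closure ({4, 4 * γ + 2, 2 * g - 4 * γ + 1} : Set ℕ) :=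
      AddSubmonoid.subset_closure (by simp)
    have h4 : (4 : ℕ) ∈
        AddSubmonoid.closure ({4, 4 * γ + 2, 2 * g - 4 * γ + 1} : Set ℕ) :=
      AddSubmonoid.subset_closure (by simp)
    have h4j : (4 * j : ℕ) ∈
        AddSubmonoid.closure ({4, 4 * γ + 2, 2 * g - 4 * γ + 1} : Set ℕ) := by
      have := AddSubmonoid.nsmul_mem _ h4 j
      simpa [smul_eq_mul, mul_comm] using this
    exact AddSubmonoid.add_mem _ h1 h4j
  have hT_odd : ∀ j, j < γ → Odd (2 * g - 4 * γ + 1 + 4 * j) := by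
    intro j hj
    rw [Nat.odd_iff]; omega
  have hT_lt : ∀ j, j < γ → 2 * g - 4 * γ + 1 + 4 * j < 2 * g := by
    intro j hj; omega
  set T : Finset ℕ := (Finset.range γ).image (fun j => 2 * g - 4 * γ + 1 + 4 * j) with hTdef
  set U₀ : Finset ℕ := (Finset.Icc 1 γ).image u₀ with hU₀def
  have hTsub : T ⊆ U₀ := by
    intro n hn
    rw [hTdef, Finset.mem_image] at hn
    obtain ⟨j, hj, rfl⟩ := hn
    rw [Finset.mem_range] at hj
    obtain ⟨m, hm1, hm2, hm3⟩ := hu₀_surj _ (hT_odd j hj) (hTmem j hj) (hT_lt j hj)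
    rw [hU₀def, Finset.mem_image]
    exact ⟨m, Finset.mem_Icc.mpr ⟨hm1, hm2⟩, hm3⟩
  have hU₀card : U₀.card ≤ γ := le_trans Finset.card_image_le (by simp)
  have hTcard : T.card = γ := by
    rw [hTdef, Finset.card_image_of_injective _ (fun a b h => by omega), Finset.card_range]
  have hUT : T = U₀ := Finset.eq_of_subset_of_card_le hTsub (by omega)
  have hu₀T : ∀ m, 1 ≤ m → m ≤ γ → ∃ j, j < γ ∧ u₀ m = 2 * g - 4 * γ + 1 + 4 * j := by
    intro m h1 h2
    have hmm : u₀ m ∈ T := by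
      rw [hUT, hU₀def, Finset.mem_image]
      exact ⟨m, Finset.mem_Icc.mpr ⟨h1, h2⟩, rfl⟩
    rw [hTdef, Finset.mem_image] at hmm
    obtain ⟨j, hj, hje⟩ := hmm
    exact ⟨j, Finset.mem_range.mp hj, hje.symm⟩
  have hu₀bound : ∀ m, 1 ≤ m → m ≤ γ → u₀ m + 4 * m ≤ 2 * g + 1 := by
    intro m
    induction m with
    | zero => omega
    | succ n ih =>
      intro h1 h2
      obtain ⟨j, hj, hje⟩ := hu₀T (n + 1) h1 h2
      rcases Nat.eq_zero_or_pos n with h0 | h0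
      · subst h0; omega
      · have hlt : u₀ (n + 1) < u₀ n := hu₀_anti n (n + 1) h0 (by omega) h2
        obtain ⟨j', hj', hje'⟩ := hu₀T n h0 (by omega)
        have ihn := ih h0 (by omega)
        omega
  have hb := hu₀bound i hi1 hiγ
  omega
end
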